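/- arXiv:1110.3211 — 7 statements merged into one kernel-verified Lean document; each statement's English description precedes it below -/
import Mathlib

section
/- Let T be a tree with at least 2 vertices, and consider the Tron game on T where Alice first picks a start vertex, then Bob picks a different start vertex, and players alternately move to adjacent unvisited vertices (Alice moving first), each claiming the vertices they traverse (including their start vertex); the game ends when both players are stuck. Then under optimal play, the number of vertices Alice claims is at most one more than the number of vertices Bob claims. -/
/-- A state of the Tron game: positions of the two players, the set of
vertices visited so far by either player, and the two scores. -/
structure TronState (V : Type) where
  posA : V
  posB : V
  visited : Finset V
  scoreA : ℕ
  scoreB : ℕ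

/-- A player at `p` is stuck if every vertex it could move to is visited. -/
def TronStuck {V : Type} (R : V → V → Prop) (p : V) (vis : Finset V) : Prop :=
  ∀ w, R p w → w ∈ vis

open Classical in
/-- Bob (second player) can force predicate `P` of the two final scores
(Alice's, Bob's), playing on the (possibly directed) edge relation `R`;
`turn = true` means Alice moves next.  A stuck player passes; the game ends
when both players are stuck. -/
def tronForceB {V : Type} [DecidableEq V] (R : V → V → Prop) (P : ℕ → ℕ → Prop) :
    ℕ → Bool → TronState V → Prop
  | 0, _, s => P s.scoreA s.scoreB
  | f + 1, true, s =>
      if TronStuck R s.posA s.visited then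
        if TronStuck R s.posB s.visited then P s.scoreA s.scoreB
        else tronForceB R P f false s
      else
        ∀ w, R s.posA w → w ∉ s.visited →
          tronForceB R P f false ⟨w, s.posB, insert w s.visited, s.scoreA + 1, s.scoreB⟩
  | f + 1, false, s =>
      if TronStuck R s.posB s.visited then
        if TronStuck R s.posA s.visited then P s.scoreA s.scoreB
        else tronForceB R P f true s
      else
        ∃ w, R s.posB w ∧ w ∉ s.visited ∧
          tronForceB R P f true ⟨s.posA, w, insert w s.visited, s.scoreA, s.scoreB + 1⟩

open Classical in
/-- Alice (first player) can force predicate `P` of the final scores. -/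
def tronForceA {V : Type} [DecidableEq V] (R : V → V → Prop) (P : ℕ → ℕ → Prop) :
    ℕ → Bool → TronState V → Prop
  | 0, _, s => P s.scoreA s.scoreB
  | f + 1, true, s =>
      if TronStuck R s.posA s.visited then
        if TronStuck R s.posB s.visited then P s.scoreA s.scoreB
        else tronForceA R P f false s
      else
        ∃ w, R s.posA w ∧ w ∉ s.visited ∧
          tronForceA R P f false ⟨w, s.posB, insert w s.visited, s.scoreA + 1, s.scoreB⟩
  | f + 1, false, s =>
      if TronStuck R s.posB s.visited then
        if TronStuck R s.posA s.visited then P s.scoreA s.scoreB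
        else tronForceA R P f true s
      else
        ∀ w, R s.posB w → w ∉ s.visited →
          tronForceA R P f true ⟨s.posA, w, insert w s.visited, s.scoreA, s.scoreB + 1⟩

open Classical in
/-- Every complete play of the game satisfies `P` of the final scores. -/
def tronInevitable {V : Type} [DecidableEq V] (R : V → V → Prop) (P : ℕ → ℕ → Prop) :
    ℕ → Bool → TronState V → Prop
  | 0, _, s => P s.scoreA s.scoreB
  | f + 1, true, s =>
      if TronStuck R s.posA s.visited then
        if TronStuck R s.posB s.visited then P s.scoreA s.scoreB
        else tronInevitable R P f false s
      else
        ∀ w, R s.posA w → w ∉ s.visited →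
          tronInevitable R P f false ⟨w, s.posB, insert w s.visited, s.scoreA + 1, s.scoreB⟩
  | f + 1, false, s =>
      if TronStuck R s.posB s.visited then
        if TronStuck R s.posA s.visited then P s.scoreA s.scoreB
        else tronInevitable R P f true s
      else
        ∀ w, R s.posB w → w ∉ s.visited →
          tronInevitable R P f true ⟨s.posA, w, insert w s.visited, s.scoreA, s.scoreB + 1⟩

/-- The initial state once Alice has started at `v` and Bob at `w`:
both vertices are visited, both scores are `1`, and Alice moves first. -/
def tronInit {V : Type} [DecidableEq V] (v w : V) : TronState V :=
  ⟨v, w, {v, w}, 1, 1⟩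

/-- Enough fuel for any Tron game on `V` to finish. -/
def tronFuel (V : Type) [Fintype V] : ℕ := 2 * Fintype.card V + 2

/-- In the Tron game on `G` (Alice picks a start vertex, then Bob picks a
different one, then they alternate, Alice first), Bob can force `P`. -/
def bobCanForce {V : Type} [Fintype V] [DecidableEq V] (G : SimpleGraph V)
    (P : ℕ → ℕ → Prop) : Prop :=
  ∀ v : V, ∃ w, w ≠ v ∧ tronForceB G.Adj P (tronFuel V) true (tronInit v w)

/-- In the Tron game on `G`, Alice can force `P`. -/
def aliceCanForce {V : Type} [Fintype V] [DecidableEq V] (G : SimpleGraph V)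
    (P : ℕ → ℕ → Prop) : Prop :=
  ∃ v : V, ∀ w, w ≠ v → tronForceA G.Adj P (tronFuel V) true (tronInit v w)


open SimpleGraph in
private lemma tron_path_length_eq_dist {V : Type} [DecidableEq V] {T : SimpleGraph V} (hacyc : T.IsAcyclic)
    {a b : V} (p : T.Walk a b) (hp : p.IsPath) : p.length = T.dist a b := by
  obtain ⟨q, hq⟩ := SimpleGraph.Reachable.exists_walk_length_eq_dist (⟨p⟩ : T.Reachable a b)
  have huniq : (⟨p, hp⟩ : T.Path a b) = ⟨q.bypass, q.bypass_isPath⟩ := hacyc.path_unique _ _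
  have hpq : p = q.bypass := congrArg Subtype.val huniq
  have h1 : p.length ≤ T.dist a b := by
    rw [hpq, ← hq]; exact q.length_bypass_le
  exact le_antisymm h1 (SimpleGraph.dist_le p)

open SimpleGraph in
private lemma tron_bob_wins {V : Type} [Fintype V] [DecidableEq V] {T : SimpleGraph V}
    (hacyc : T.IsAcyclic) (v : V) (h : ℕ) (hh : ∀ x, T.dist v x ≤ h) :
    ∀ (f : ℕ) (turn : Bool) (s : TronState V) (r : List V),
      List.Chain T.Adj s.posB r →
      r.Nodup →
      (∀ x ∈ r, x ∉ s.visited) →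
      (∀ x ∈ r, ∀ W : T.Walk s.posA x, ∃ y ∈ W.support, y ∈ s.visited ∧ y ≠ s.posA) →
      h ≤ s.scoreB + r.length →
      (∃ p : T.Walk v s.posA, p.IsPath ∧ (∀ y ∈ p.support, y ∈ s.visited) ∧
        s.scoreA = p.length + 1) →
      (2 * (Fintype.card V - s.visited.card) + 2 ≤ f ∨
        (2 * (Fintype.card V - s.visited.card) + 1 ≤ f ∧
          ¬ TronStuck T.Adj (cond turn s.posA s.posB) s.visited)) →
      tronForceB T.Adj (fun a b => a ≤ b + 1) f turn s := by
  intro f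
  induction f with
  | zero =>
    intro turn s r _ _ _ _ _ _ hfuel
    rcases hfuel with hfuel | ⟨hfuel, _⟩ <;> omega
  | succ f ih =>
    intro turn s r hchain hnd hunvis hsep hscoreB hA hfuel
    -- final-score fact, available whenever r = []
    have hfin : r = [] → s.scoreA ≤ s.scoreB + 1 := by
      intro hr
      obtain ⟨p, hp, _, hsA⟩ := hA
      have hlen := tron_path_length_eq_dist hacyc p hp
      have := hh s.posA
      subst hr
      simp only [List.length_nil, Nat.add_zero] at hscoreB
      omega
    have hrnil_of_stuckB : TronStuck T.Adj s.posB s.visited → r = [] := by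
      intro hB
      cases r with
      | nil => rfl
      | cons x rest =>
        have hadj : T.Adj s.posB x := (List.chain_cons.mp hchain).1
        exact absurd (hB x hadj) (hunvis x List.mem_cons_self)
    have hcardlt : ∀ u : V, u ∉ s.visited → s.visited.card < Fintype.card V := by
      intro u hu
      have : s.visited ⊂ Finset.univ := by
        refine Finset.ssubset_univ_iff.mpr ?_
        intro hcontra
        exact hu (hcontra ▸ Finset.mem_univ u)
      simpa using Finset.card_lt_card this
    cases turn with
    | true =>
      rw [tronForceB]
      by_cases hA1 : TronStuck T.Adj s.posA s.visited
      · rw [if_pos hA1]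
        by_cases hB1 : TronStuck T.Adj s.posB s.visited
        · rw [if_pos hB1]
          exact hfin (hrnil_of_stuckB hB1)
        · rw [if_neg hB1]
          refine ih false s r hchain hnd hunvis hsep hscoreB hA ?_
          refine Or.inr ⟨?_, hB1⟩
          rcases hfuel with hfuel | ⟨hfuel, hns⟩
          · omega
          · exact absurd hA1 hns
      · rw [if_neg hA1]
        intro u hadj hunv
        have hunotr : u ∉ r := by
          intro hur
          obtain ⟨y, hy, hyvis, hyne⟩ :=
            hsep u hur (SimpleGraph.Walk.cons hadj SimpleGraph.Walk.nil)
          simp only [SimpleGraph.Walk.support_cons, SimpleGraph.Walk.support_nil,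
            List.mem_cons, List.mem_singleton] at hy
          rcases hy with rfl | hy
          · exact hyne rfl
          · simp only [List.not_mem_nil, or_false] at hy
            subst hy
            exact hunv hyvis
        obtain ⟨p, hp, hpsup, hsA⟩ := hA
        have hup : u ∉ p.support := fun hcon => hunv (hpsup u hcon)
        refine ih false ⟨u, s.posB, insert u s.visited, s.scoreA + 1, s.scoreB⟩ r
          hchain hnd ?_ ?_ hscoreB ?_ ?_
        · intro x hx hxvis
          rcases Finset.mem_insert.mp hxvis with rfl | hxvis
          · exact hunotr hx
          · exact hunvis x hx hxvis
        · intro x hx W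
          obtain ⟨y, hy, hyvis, hyne⟩ := hsep x hx (SimpleGraph.Walk.cons hadj W)
          simp only [SimpleGraph.Walk.support_cons, List.mem_cons] at hy
          rcases hy with rfl | hy
          · exact absurd rfl hyne
          · refine ⟨y, hy, Finset.mem_insert_of_mem hyvis, ?_⟩
            intro hcon; subst hcon; exact hunv hyvis
        · refine ⟨p.concat hadj, ?_, ?_, ?_⟩
          · rw [SimpleGraph.Walk.isPath_def, SimpleGraph.Walk.support_concat]
            rw [List.nodup_append]
            exact ⟨hp.support_nodup, List.nodup_singleton u,
              fun y hy => by simp; rintro rfl; exact hup hy⟩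
          · intro y hy
            rw [SimpleGraph.Walk.support_concat] at hy
            rcases List.mem_append.mp hy with hy | hy
            · exact Finset.mem_insert_of_mem (hpsup y hy)
            · simp only [List.mem_singleton] at hy
              rw [hy]; exact Finset.mem_insert_self u s.visited
          · show s.scoreA + 1 = (p.concat hadj).length + 1
            rw [SimpleGraph.Walk.length_concat]; omega
        · left
          show 2 * (Fintype.card V - (insert u s.visited).card) + 2 ≤ f
          have hc1 := hcardlt u hunv
          have hc2 : (insert u s.visited).card = s.visited.card + 1 :=
            Finset.card_insert_of_notMem hunv
          rcases hfuel with hfuel | ⟨hfuel, _⟩ <;> omega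
    | false =>
      rw [tronForceB]
      by_cases hB1 : TronStuck T.Adj s.posB s.visited
      · rw [if_pos hB1]
        have hrnil := hrnil_of_stuckB hB1
        by_cases hA1 : TronStuck T.Adj s.posA s.visited
        · rw [if_pos hA1]
          exact hfin hrnil
        · rw [if_neg hA1]
          refine ih true s r hchain hnd hunvis hsep hscoreB hA ?_
          refine Or.inr ⟨?_, hA1⟩
          rcases hfuel with hfuel | ⟨hfuel, hns⟩
          · omega
          · exact absurd hB1 hns
      · rw [if_neg hB1]
        cases r with
        | cons x rest =>
          have hadj : T.Adj s.posB x := (List.chain_cons.mp hchain).1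
          have hxnv : x ∉ s.visited := hunvis x List.mem_cons_self
          refine ⟨x, hadj, hxnv, ?_⟩
          have hxrest : x ∉ rest := (List.nodup_cons.mp hnd).1
          refine ih true ⟨s.posA, x, insert x s.visited, s.scoreA, s.scoreB + 1⟩ rest
            (List.chain_cons.mp hchain).2 (List.nodup_cons.mp hnd).2 ?_ ?_ ?_ ?_ ?_
          · intro y hy hyvis
            rcases Finset.mem_insert.mp hyvis with rfl | hyvis
            · exact hxrest hy
            · exact hunvis y (List.mem_cons_of_mem x hy) hyvis
          · intro y hy W
            obtain ⟨z, hz, hzvis, hzne⟩ := hsep y (List.mem_cons_of_mem x hy) W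
            exact ⟨z, hz, Finset.mem_insert_of_mem hzvis, hzne⟩
          · show h ≤ s.scoreB + 1 + rest.length
            simp only [List.length_cons] at hscoreB
            omega
          · obtain ⟨p, hp, hpsup, hsA⟩ := hA
            exact ⟨p, hp, fun y hy => Finset.mem_insert_of_mem (hpsup y hy), hsA⟩
          · left
            show 2 * (Fintype.card V - (insert x s.visited).card) + 2 ≤ f
            have hc1 := hcardlt x hxnv
            have hc2 : (insert x s.visited).card = s.visited.card + 1 :=
              Finset.card_insert_of_notMem hxnv
            rcases hfuel with hfuel | ⟨hfuel, _⟩ <;> omega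
        | nil =>
          simp only [TronStuck, not_forall, Classical.not_imp] at hB1
          obtain ⟨u, hadj, hunv⟩ := hB1
          refine ⟨u, hadj, hunv, ?_⟩
          refine ih true ⟨s.posA, u, insert u s.visited, s.scoreA, s.scoreB + 1⟩ []
            List.Chain.nil List.nodup_nil (by simp) (by simp) ?_ ?_ ?_
          · show h ≤ s.scoreB + 1 + ([] : List V).length
            simp only [List.length_nil, Nat.add_zero] at hscoreB ⊢; omega
          · obtain ⟨p, hp, hpsup, hsA⟩ := hA
            exact ⟨p, hp, fun y hy => Finset.mem_insert_of_mem (hpsup y hy), hsA⟩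
          · left
            show 2 * (Fintype.card V - (insert u s.visited).card) + 2 ≤ f
            have hc1 := hcardlt u hunv
            have hc2 : (insert u s.visited).card = s.visited.card + 1 :=
              Finset.card_insert_of_notMem hunv
            rcases hfuel with hfuel | ⟨hfuel, _⟩ <;> omega

/-- On a tree with at least two vertices, under optimal play
Alice's score is at most one more than Bob's score: Bob can force this. -/
theorem tron_tree_alice_at_most_bob_add_one
    {V : Type} [Fintype V] [DecidableEq V] (T : SimpleGraph V)
    (hconn : T.Connected) (hacyc : T.IsAcyclic) (hcard : 2 ≤ Fintype.card V) :
    bobCanForce T (fun a b => a ≤ b + 1) := by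
  intro v
  classical
  obtain ⟨u, hu⟩ : ∃ u, ∀ x, T.dist v x ≤ T.dist v u := by
    obtain ⟨u, _, hu⟩ := Finset.exists_max_image Finset.univ (T.dist v)
      ⟨v, Finset.mem_univ v⟩
    exact ⟨u, fun x => hu x (Finset.mem_univ x)⟩
  set h : ℕ := T.dist v u with hdef
  have hpos : 1 ≤ h := by
    obtain ⟨x, hx⟩ := Fintype.exists_ne_of_one_lt_card (by omega) v
    have h1 : 0 < T.dist v x := hconn.pos_dist_of_ne (Ne.symm hx)
    have := hu x
    omega
  obtain ⟨p0, hp0len⟩ := hconn.exists_walk_length_eq_dist v u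
  have hplen : p0.bypass.length = h := by
    have h1 := p0.length_bypass_le
    have h2 := SimpleGraph.dist_le p0.bypass
    omega
  have hppath : p0.bypass.IsPath := p0.bypass_isPath
  obtain ⟨w, e, q, hpq⟩ : ∃ (w : V) (e : T.Adj v w) (q : T.Walk w u),
      p0.bypass = SimpleGraph.Walk.cons e q := by
    cases hb : p0.bypass with
    | nil =>
      exfalso
      rw [hb] at hplen
      simp at hplen
      omega
    | cons e q => exact ⟨_, e, q, rfl⟩
  rw [hpq] at hplen hppath
  simp only [SimpleGraph.Walk.length_cons] at hplen
  have hqpath : q.IsPath := hppath.of_cons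
  have hvq : v ∉ q.support := by
    have := hppath.support_nodup
    rw [SimpleGraph.Walk.support_cons] at this
    exact (List.nodup_cons.mp this).1
  have hqsup : q.support = w :: q.support.tail := q.support_eq_cons
  have hwtail : w ∉ q.support.tail := by
    have := hqpath.support_nodup
    rw [hqsup] at this
    exact (List.nodup_cons.mp this).1
  refine ⟨w, e.ne', ?_⟩
  refine tron_bob_wins hacyc v h hu (tronFuel V) true (tronInit v w) q.support.tail
    ?_ ?_ ?_ ?_ ?_ ?_ ?_
  · -- chain
    have hc : List.Chain T.Adj v q.support := SimpleGraph.Walk.isChain_adj_cons_support e q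
    rw [hqsup] at hc
    exact (List.chain_cons.mp hc).2
  · -- nodup
    have := hqpath.support_nodup
    rw [hqsup] at this
    exact (List.nodup_cons.mp this).2
  · -- unvisited
    intro x hx hxvis
    have hxq : x ∈ q.support := by rw [hqsup]; exact List.mem_cons_of_mem w hx
    simp only [tronInit, Finset.mem_insert, Finset.mem_singleton] at hxvis
    rcases hxvis with rfl | rfl
    · exact hvq hxq
    · exact hwtail hx
  · -- separation
    intro x hx W
    have hxq : x ∈ q.support := by rw [hqsup]; exact List.mem_cons_of_mem w hx
    -- the canonical path from v to x passes through w
    have htpath : (q.takeUntil x hxq).IsPath := hqpath.takeUntil hxq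
    have hvt : v ∉ (q.takeUntil x hxq).support :=
      fun hcon => hvq (q.support_takeUntil_subset hxq hcon)
    have hP1 : (SimpleGraph.Walk.cons e (q.takeUntil x hxq)).IsPath := htpath.cons hvt
    have huniq : (⟨W.bypass, W.bypass_isPath⟩ : T.Path _ x) =
        ⟨SimpleGraph.Walk.cons e (q.takeUntil x hxq), hP1⟩ := hacyc.path_unique _ _
    have hWb : W.bypass = SimpleGraph.Walk.cons e (q.takeUntil x hxq) :=
      congrArg Subtype.val huniq
    have hwW : w ∈ W.support := by
      apply W.support_bypass_subset
      rw [hWb]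
      exact List.mem_cons_of_mem v (q.takeUntil x hxq).start_mem_support
    refine ⟨w, hwW, ?_, e.ne'⟩
    simp [tronInit]
  · -- score B
    have hlt : q.support.tail.length = q.length := by
      have := q.length_support
      rw [hqsup] at this
      simp only [List.length_cons] at this
      omega
    simp only [tronInit, hlt]
    omega
  · -- Alice invariant
    refine ⟨SimpleGraph.Walk.nil, SimpleGraph.Walk.IsPath.nil, ?_, rfl⟩
    intro y hy
    simp only [tronInit, SimpleGraph.Walk.support_nil, List.mem_singleton] at hy
    subst hy
    simp [tronInit]
  · -- fuel
    left
    have hvw : v ≠ w := e.ne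
    have hcard2 : (tronInit v w : TronState V).visited.card = 2 := by
      simp [tronInit, Finset.card_insert_of_notMem, hvw]
    simp only [tronInit] at hcard2 ⊢
    rw [hcard2]
    simp only [tronFuel]
    omega
end

section
/- In the Tron game on a tree T, under optimal play Bob's score is at most twice Alice's score. -/
section TronAux

open SimpleGraph Walk

variable {V : Type} [DecidableEq V]

/-- The graph `T` with all edges at `c` removed. -/
private def Gdel (T : SimpleGraph V) (c : V) : SimpleGraph V where
  Adj x y := T.Adj x y ∧ x ≠ c ∧ y ≠ c
  symm := ⟨fun x y ⟨h, hx, hy⟩ => ⟨h.symm, hy, hx⟩⟩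
  loopless := ⟨fun x ⟨h, _, _⟩ => T.loopless.irrefl x h⟩

private lemma gdel_le (T : SimpleGraph V) (c : V) : Gdel T c ≤ T := fun {_ _} h => h.1

private lemma gdel_support_ne {T : SimpleGraph V} {c a b : V} (p : (Gdel T c).Walk a b)
    (ha : a ≠ c) : ∀ x ∈ p.support, x ≠ c := by
  induction p with
  | nil =>
    intro x hx
    rw [Walk.support_nil, List.mem_singleton] at hx
    subst hx; exact ha
  | cons h q ih =>
    intro x hx
    rw [Walk.support_cons, List.mem_cons] at hx
    rcases hx with h1 | h2
    · subst h1; exact ha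
    · exact ih h.2.2 x h2

/-- In an acyclic connected graph, every path has length `dist`. -/
private lemma path_length_eq_dist {T : SimpleGraph V} (hconn : T.Connected)
    (hacyc : T.IsAcyclic) {a b : V} (q : T.Walk a b) (hq : q.IsPath) :
    q.length = T.dist a b := by
  obtain ⟨p', hp', hl⟩ := hconn.exists_path_of_dist a b
  have h := hacyc.path_unique ⟨q, hq⟩ ⟨p', hp'⟩
  rw [← hl]
  exact congrArg Walk.length (congrArg Subtype.val h)

private lemma dist_getVert_le {T : SimpleGraph V} (hconn : T.Connected) :
    ∀ {a b : V} (p : T.Walk a b) (i : ℕ), T.dist a (p.getVert i) ≤ i := by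
  intro a b p
  induction p with
  | nil =>
    intro i
    rw [Walk.getVert_of_length_le _ (by simp), SimpleGraph.dist_self]
    exact Nat.zero_le _
  | @cons x y z h q ih =>
    intro i
    cases i with
    | zero =>
      rw [Walk.getVert_zero, SimpleGraph.dist_self]
    | succ i =>
      rw [Walk.getVert_cons_succ]
      calc T.dist x (q.getVert i) ≤ T.dist x y + T.dist y (q.getVert i) := hconn.dist_triangle
        _ ≤ i + 1 := by
            have h1 : T.dist x y ≤ 1 := by
              simpa using SimpleGraph.dist_le (Walk.cons h Walk.nil)
            have h2 := ih i
            omega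

/-- Key tree separation: vertices strictly on the two sides of `c` along a path
through `c` are not reachable from each other once `c` is deleted. -/
private lemma tree_sep {T : SimpleGraph V} (hacyc : T.IsAcyclic)
    {c a b : V} (P₁ : T.Walk c a) (P₂ : T.Walk c b)
    (hC : (P₁.reverse.append P₂).IsPath)
    {x₁ x₂ : V} (h₁ : x₁ ∈ P₁.support.tail) (h₂ : x₂ ∈ P₂.support.tail) :
    ¬ (Gdel T c).Reachable x₁ x₂ := by
  intro hreach
  have hP₁ : P₁.IsPath := (Walk.isPath_reverse_iff P₁).mp hC.of_append_left
  have hP₂ : P₂.IsPath := hC.of_append_right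
  have hdisj : ∀ y, y ∈ P₁.support → y ∈ P₂.support.tail → False := by
    have hnd := hC.support_nodup
    rw [Walk.support_append, Walk.support_reverse, List.nodup_append] at hnd
    intro y hy1 hy2
    exact hnd.2.2 _ (List.mem_reverse.mpr hy1) _ hy2 rfl
  have hc1 : c ∉ P₁.support.tail := by
    have h := hP₁.support_nodup
    rw [Walk.support_eq_cons] at h
    exact (List.nodup_cons.mp h).1
  have hx₁c : x₁ ≠ c := fun h => hc1 (h ▸ h₁)
  obtain ⟨qc⟩ := hreach
  have hne : ∀ x ∈ qc.support, x ≠ c := gdel_support_ne qc hx₁c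
  have hqmem : ∀ x ∈ (qc.mapLe (gdel_le T c)).support, x ≠ c := by
    intro x hx
    apply hne
    rw [Walk.support_map] at hx
    simpa using hx
  set q : T.Walk x₁ x₂ := (qc.mapLe (gdel_le T c)).bypass with hqdef
  have hq : q.IsPath := Walk.bypass_isPath _
  have hqc : c ∉ q.support := fun hc =>
    hqmem c (Walk.support_bypass_subset _ hc) rfl
  have hx₁s : x₁ ∈ P₁.support := List.mem_of_mem_tail h₁
  have hx₂s : x₂ ∈ P₂.support := List.mem_of_mem_tail h₂
  set t₁ := P₁.takeUntil x₁ hx₁s with ht₁def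
  set t₂ := P₂.takeUntil x₂ hx₂s with ht₂def
  have ht₁ : t₁.IsPath := hP₁.takeUntil hx₁s
  have ht₂ : t₂.IsPath := hP₂.takeUntil hx₂s
  have ht₂tail : c ∉ t₂.support.tail := by
    have h := ht₂.support_nodup
    rw [Walk.support_eq_cons] at h
    exact (List.nodup_cons.mp h).1
  set S : T.Walk x₁ x₂ := t₁.reverse.append t₂ with hSdef
  have hS : S.IsPath := by
    rw [Walk.isPath_def, hSdef, Walk.support_append, Walk.support_reverse, List.nodup_append]
    refine ⟨List.nodup_reverse.mpr ht₁.support_nodup, ?_, ?_⟩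
    · have h := ht₂.support_nodup
      rw [Walk.support_eq_cons] at h
      exact (List.nodup_cons.mp h).2
    · intro y hy1 y' hy2 hyy; subst hyy
      have hy1' : y ∈ P₁.support :=
        Walk.support_takeUntil_subset _ _ (List.mem_reverse.mp hy1)
      have hyc : y ≠ c := fun h => ht₂tail (h ▸ hy2)
      have hy2' : y ∈ P₂.support :=
        Walk.support_takeUntil_subset _ _ (List.mem_of_mem_tail hy2)
      rw [Walk.support_eq_cons] at hy2'
      rcases List.mem_cons.mp hy2' with h | h
      · exact hyc h
      · exact hdisj y hy1' h
  have hcS : c ∈ S.support := by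
    rw [hSdef, Walk.mem_support_append_iff]
    left
    exact Walk.end_mem_support _
  have heq := hacyc.path_unique (⟨q, hq⟩ : T.Path x₁ x₂) ⟨S, hS⟩
  apply hqc
  rw [show q = S from congrArg Subtype.val heq]
  exact hcS

/-- The invariant maintained by Alice's strategy. -/
private structure TronInv (T : SimpleGraph V) (c w0 : V) (A0 : ℕ)
    (turn : Bool) (fuel : ℕ) (s : TronState V) (p : List V) : Prop where
  chain : List.Chain T.Adj s.posA p
  nodup : p.Nodup
  unvis : ∀ x ∈ p, x ∉ s.visited
  cvis  : c ∈ s.visited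
  bnotc : s.posB ≠ c
  sep   : ∀ x ∈ p, ¬ (Gdel T c).Reachable s.posB x
  scoreAinv : A0 ≤ s.scoreA + p.length
  fuelinv : 2 * p.length ≤ fuel + (cond turn 1 0)
  btrail : ∃ q : T.Walk w0 s.posB, q.IsPath ∧ s.scoreB = q.length + 1 ∧
      ∀ x ∈ q.support, x ∈ s.visited

private lemma force_of_inv (T : SimpleGraph V) (c w0 : V) (A0 B0 : ℕ)
    (hB : ∀ (a b : V) (q : T.Walk a b), q.IsPath → q.length + 1 ≤ B0)
    (hAB : B0 ≤ 2 * A0) :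
    ∀ (fuel : ℕ) (turn : Bool) (s : TronState V) (p : List V),
      TronInv T c w0 A0 turn fuel s p →
      tronForceA T.Adj (fun a b => b ≤ 2 * a) fuel turn s := by
  intro fuel
  induction fuel with
  | zero =>
    intro turn s p hI
    obtain ⟨q, hq, hlen, -⟩ := hI.btrail
    have h1 := hB _ _ q hq
    have h2 := hI.scoreAinv
    have h3 := hI.fuelinv
    have hp0 : p.length = 0 := by
      cases turn <;> simp only [Bool.cond_true, Bool.cond_false] at h3 <;> omega
    show s.scoreB ≤ 2 * s.scoreA
    omega
  | succ f ih =>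
    intro turn s p hI
    have bbound : s.scoreB ≤ 2 * A0 := by
      obtain ⟨q, hq, hlen, -⟩ := hI.btrail
      have := hB _ _ q hq
      omega
    have hstuckp : TronStuck T.Adj s.posA s.visited → p = [] := by
      intro hst
      cases hp : p with
      | nil => rfl
      | cons x r =>
        exfalso
        have hch := hI.chain
        rw [hp] at hch; change List.IsChain _ (_ :: _ :: _) at hch; rw [List.chain_cons] at hch
        exact hI.unvis x (by rw [hp]; exact List.mem_cons_self) (hst x hch.1)
    cases turn with
    | true =>
      rw [tronForceA]
      by_cases hA : TronStuck T.Adj s.posA s.visited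
      · rw [if_pos hA]
        have hp := hstuckp hA
        have hsc := hI.scoreAinv
        rw [hp] at hsc
        simp only [List.length_nil, Nat.add_zero] at hsc
        by_cases hBs : TronStuck T.Adj s.posB s.visited
        · rw [if_pos hBs]
          show s.scoreB ≤ 2 * s.scoreA
          omega
        · rw [if_neg hBs]
          exact ih false s p
            { chain := hI.chain, nodup := hI.nodup, unvis := hI.unvis,
              cvis := hI.cvis, bnotc := hI.bnotc, sep := hI.sep,
              scoreAinv := hI.scoreAinv,
              fuelinv := by rw [hp]; simp,
              btrail := hI.btrail }
      · rw [if_neg hA]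
        cases hp : p with
        | cons x r =>
          have hch := hI.chain
          rw [hp] at hch; change List.IsChain _ (_ :: _ :: _) at hch; rw [List.chain_cons] at hch
          have hndp := hI.nodup
          rw [hp, List.nodup_cons] at hndp
          refine ⟨x, hch.1, hI.unvis x (by rw [hp]; exact List.mem_cons_self), ?_⟩
          apply ih false _ r
          exact
            { chain := hch.2
              nodup := hndp.2
              unvis := by
                intro y hy hmem
                rcases Finset.mem_insert.mp hmem with h | h
                · exact hndp.1 (h ▸ hy)
                · exact hI.unvis y (by rw [hp]; exact List.mem_cons_of_mem _ hy) h
              cvis := Finset.mem_insert_of_mem hI.cvis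
              bnotc := hI.bnotc
              sep := fun y hy => hI.sep y (by rw [hp]; exact List.mem_cons_of_mem _ hy)
              scoreAinv := by
                have h := hI.scoreAinv
                rw [hp, List.length_cons] at h
                show A0 ≤ s.scoreA + 1 + r.length
                omega
              fuelinv := by
                have h := hI.fuelinv
                rw [hp, List.length_cons] at h
                simp only [Bool.cond_true, Bool.cond_false] at h ⊢
                omega
              btrail := by
                obtain ⟨q, h1, h2, h3⟩ := hI.btrail
                exact ⟨q, h1, h2, fun y hy => Finset.mem_insert_of_mem (h3 y hy)⟩ }
        | nil =>
          have hex : ∃ y, T.Adj s.posA y ∧ y ∉ s.visited := by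
            by_contra hcon
            push_neg at hcon
            exact hA fun y hy => hcon y hy
          obtain ⟨y, hadj, hmem⟩ := hex
          refine ⟨y, hadj, hmem, ?_⟩
          apply ih false _ ([] : List V)
          exact
            { chain := List.Chain.nil
              nodup := List.nodup_nil
              unvis := fun z hz => absurd hz List.not_mem_nil
              cvis := Finset.mem_insert_of_mem hI.cvis
              bnotc := hI.bnotc
              sep := fun z hz => absurd hz List.not_mem_nil
              scoreAinv := by
                have h := hI.scoreAinv
                rw [hp, List.length_nil] at h
                show A0 ≤ s.scoreA + 1 + ([] : List V).length
                simp only [List.length_nil]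
                omega
              fuelinv := by simp
              btrail := by
                obtain ⟨q, h1, h2, h3⟩ := hI.btrail
                exact ⟨q, h1, h2, fun z hz => Finset.mem_insert_of_mem (h3 z hz)⟩ }
    | false =>
      rw [tronForceA]
      by_cases hBs : TronStuck T.Adj s.posB s.visited
      · rw [if_pos hBs]
        by_cases hA : TronStuck T.Adj s.posA s.visited
        · rw [if_pos hA]
          have hp := hstuckp hA
          have hsc := hI.scoreAinv
          rw [hp] at hsc
          simp only [List.length_nil, Nat.add_zero] at hsc
          show s.scoreB ≤ 2 * s.scoreA
          omega
        · rw [if_neg hA]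
          apply ih true s p
          exact
            { chain := hI.chain, nodup := hI.nodup, unvis := hI.unvis,
              cvis := hI.cvis, bnotc := hI.bnotc, sep := hI.sep,
              scoreAinv := hI.scoreAinv,
              fuelinv := by
                have h := hI.fuelinv
                simp only [Bool.cond_true, Bool.cond_false] at h ⊢
                omega,
              btrail := hI.btrail }
      · rw [if_neg hBs]
        intro u hadj hvis
        have hunec : u ≠ c := fun h => hvis (h ▸ hI.cvis)
        have hGadj : (Gdel T c).Adj s.posB u := ⟨hadj, hI.bnotc, hunec⟩
        apply ih true _ p
        exact
          { chain := hI.chain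
            nodup := hI.nodup
            unvis := by
              intro y hy hmem
              rcases Finset.mem_insert.mp hmem with h | h
              · exact hI.sep y hy (h ▸ hGadj.reachable)
              · exact hI.unvis y hy h
            cvis := Finset.mem_insert_of_mem hI.cvis
            bnotc := hunec
            sep := fun y hy hr => hI.sep y hy (hGadj.reachable.trans hr)
            scoreAinv := hI.scoreAinv
            fuelinv := by
              have h := hI.fuelinv
              simp only [Bool.cond_true, Bool.cond_false] at h ⊢
              omega
            btrail := by
              obtain ⟨q, h1, h2, h3⟩ := hI.btrail
              refine ⟨q.concat hadj, ?_, ?_, ?_⟩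
              · rw [Walk.isPath_def, Walk.support_concat,
                  List.nodup_append]
                refine ⟨h1.support_nodup, List.nodup_singleton u, ?_⟩
                intro y hy1 b hy2 heq
                rw [List.mem_singleton] at hy2
                subst hy2; subst heq
                exact hvis (h3 y hy1)
              · show s.scoreB + 1 = (q.concat hadj).length + 1
                rw [Walk.length_concat]
                omega
              · intro y hy
                rw [Walk.support_concat, List.mem_append] at hy
                rcases hy with h | h
                · exact Finset.mem_insert_of_mem (h3 y h)
                · rw [List.mem_singleton] at h
                  subst h
                  exact Finset.mem_insert_self _ _ }


/-- On a tree, under optimal play Bob's score is at most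
twice Alice's score: Alice can force this. -/
theorem tron_tree_bob_at_most_twice_alice
    {V : Type} [Fintype V] [DecidableEq V] (T : SimpleGraph V)
    (hconn : T.Connected) (hacyc : T.IsAcyclic) (hcard : 2 ≤ Fintype.card V) :
    aliceCanForce T (fun a b => b ≤ 2 * a) := by
  classical
  have hnV : Nonempty V := Fintype.card_pos_iff.mp (by omega)
  obtain ⟨⟨u₀, v₀⟩, hmax⟩ := Finite.exists_max (fun p : V × V => T.dist p.1 p.2)
  simp only [] at hmax
  set d := T.dist u₀ v₀ with hd
  have hB : ∀ (a b : V) (q : T.Walk a b), q.IsPath → q.length + 1 ≤ d + 1 := by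
    intro a b q hq
    have h1 := path_length_eq_dist hconn hacyc q hq
    have h2 := hmax (a, b)
    simp only at h2
    omega
  obtain ⟨W, hW⟩ := hconn.exists_walk_length_eq_dist u₀ v₀
  set m := d / 2 with hm
  have hmd : m ≤ d := Nat.div_le_self _ _
  set c := W.getVert m with hc
  have hduc : T.dist u₀ c ≤ m := dist_getVert_le hconn W m
  have hrev : W.reverse.getVert (d - m) = c := by
    rw [Walk.getVert_reverse, hc]
    congr 1
    rw [hW, ← hd]
    omega
  have hdcv : T.dist c v₀ ≤ d - m := by
    have h := dist_getVert_le hconn W.reverse (d - m)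
    rw [hrev] at h
    rw [SimpleGraph.dist_comm]
    exact h
  have htri : d ≤ T.dist u₀ c + T.dist c v₀ := by
    rw [hd]
    exact hconn.dist_triangle
  have hduc' : T.dist c u₀ = m := by rw [SimpleGraph.dist_comm]; omega
  have hdcv' : T.dist c v₀ = d - m := by omega
  obtain ⟨P₁, hP₁, hP₁l⟩ := hconn.exists_path_of_dist c u₀
  obtain ⟨P₂, hP₂, hP₂l⟩ := hconn.exists_path_of_dist c v₀
  rw [hduc'] at hP₁l
  rw [hdcv'] at hP₂l
  have hClen : (P₁.reverse.append P₂).length = d := by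
    rw [Walk.length_append, Walk.length_reverse]
    omega
  have hC : (P₁.reverse.append P₂).IsPath :=
    Walk.isPath_of_length_eq_dist _ (by rw [hClen, hd])
  have hdn : d < Fintype.card V := by
    have h := hC.length_lt
    omega
  -- properties of the two candidate routes for Alice
  have hchain₁ : List.Chain T.Adj c P₁.support.tail := by
    have h := P₁.isChain_adj_support
    rw [Walk.support_eq_cons] at h
    exact h
  have hchain₂ : List.Chain T.Adj c P₂.support.tail := by
    have h := P₂.isChain_adj_support
    rw [Walk.support_eq_cons] at h
    exact h
  have hnd₁ : (c :: P₁.support.tail).Nodup := by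
    have h := hP₁.support_nodup
    rwa [Walk.support_eq_cons] at h
  have hnd₂ : (c :: P₂.support.tail).Nodup := by
    have h := hP₂.support_nodup
    rwa [Walk.support_eq_cons] at h
  have hlen₁ : P₁.support.tail.length = m := by
    have h := P₁.length_support
    have h2 : P₁.support.tail.length + 1 = P₁.support.length := by
      rw [Walk.support_eq_cons P₁]
      simp
    omega
  have hlen₂ : P₂.support.tail.length = d - m := by
    have h := P₂.length_support
    have h2 : P₂.support.tail.length + 1 = P₂.support.length := by
      rw [Walk.support_eq_cons P₂]
      simp
    omega
  refine ⟨c, ?_⟩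
  intro w hw
  -- choose the side of `c` that Bob cannot reach
  have hside : ∃ p : List V, List.Chain T.Adj c p ∧ (c :: p).Nodup ∧
      m ≤ p.length ∧ p.length ≤ d ∧ ∀ x ∈ p, ¬ (Gdel T c).Reachable w x := by
    by_cases hcase : ∀ x ∈ P₁.support.tail, ¬ (Gdel T c).Reachable w x
    · exact ⟨P₁.support.tail, hchain₁, hnd₁, by omega, by omega, hcase⟩
    · push_neg at hcase
      obtain ⟨x₁, hx₁mem, hx₁r⟩ := hcase
      refine ⟨P₂.support.tail, hchain₂, hnd₂, by omega, by omega, ?_⟩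
      intro x hx hr
      exact tree_sep hacyc P₁ P₂ hC hx₁mem hx (hx₁r.symm.trans hr)
  obtain ⟨p, hpchain, hpnodup, hplen, hplen', hpsep⟩ := hside
  rw [List.nodup_cons] at hpnodup
  apply force_of_inv T c w (m + 1) (d + 1) hB (by omega)
  exact
    { chain := hpchain
      nodup := hpnodup.2
      unvis := by
        intro x hx hmem
        rcases Finset.mem_insert.mp hmem with h | h
        · exact hpnodup.1 (h ▸ hx)
        · rw [Finset.mem_singleton] at h
          subst h
          exact hpsep x hx (SimpleGraph.Reachable.refl x)
      cvis := Finset.mem_insert_self _ _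
      bnotc := hw
      sep := hpsep
      scoreAinv := by
        show m + 1 ≤ 1 + p.length
        omega
      fuelinv := by
        show 2 * p.length ≤ tronFuel V + cond true 1 0
        rw [tronFuel]
        simp only [Bool.cond_true]
        omega
      btrail := by
        refine ⟨Walk.nil, Walk.IsPath.nil, rfl, ?_⟩
        intro x hx
        change x ∈ [w] at hx; rw [List.mem_singleton] at hx
        subst hx
        simp [tronInit] }

end TronAux
end

section
/- Let T be a tree, let v be any vertex of T with neighbors w_1,...,w_k, and for each i let l_i be the maximum number of vertices on a path in T - v starting at w_i. If Alice starts at v, then Bob, starting at a neighbor w_j achieving the maximum l_j, can guarantee a score of at least l_j, while Alice's score is at most l_j + 1. -/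
/-- The maximum number of vertices of a simple path in `H` starting at `u`. -/
noncomputable def maxPathFrom {W : Type} (H : SimpleGraph W) (u : W) : ℕ :=
  sSup {n | ∃ (x : W) (p : H.Walk u x), p.IsPath ∧ n = p.support.length}

set_option linter.unusedSectionVars false


section TronAux

open SimpleGraph

/-- Any path from `u` witnesses a lower bound for `maxPathFrom0`. -/
lemma tron_bddAbove {W : Type} [Fintype W] (H : SimpleGraph W) (u : W) :
    BddAbove {n | ∃ (x : W) (p : H.Walk u x), p.IsPath ∧ n = p.support.length} := by
  refine ⟨Fintype.card W, ?_⟩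
  rintro n ⟨x, p, hp, rfl⟩
  exact hp.support_nodup.length_le_card

lemma tron_one_mem {W : Type} (H : SimpleGraph W) (u : W) :
    1 ∈ {n | ∃ (x : W) (p : H.Walk u x), p.IsPath ∧ n = p.support.length} :=
  ⟨u, SimpleGraph.Walk.nil, SimpleGraph.Walk.IsPath.nil, by simp⟩

lemma tron_concat_isPath {W : Type} {H : SimpleGraph W} {u x y : W} {h : H.Adj x y}
    {p : H.Walk u x} (hp : p.IsPath) (hy : y ∉ p.support) : (p.concat h).IsPath := by
  rw [← SimpleGraph.Walk.isPath_reverse_iff, SimpleGraph.Walk.reverse_concat,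
    SimpleGraph.Walk.cons_isPath_iff]
  exact ⟨by rwa [SimpleGraph.Walk.isPath_reverse_iff],
    by rwa [SimpleGraph.Walk.support_reverse, List.mem_reverse]⟩

variable {V : Type} [Fintype V] [DecidableEq V]

/-- The component of `w` in `T - v`. -/
def tronC (T : SimpleGraph V) (v w : V) (hw : w ≠ v) : Set V :=
  {x | ∃ hx : x ≠ v, (T.induce {y : V | y ≠ v}).Reachable ⟨w, hw⟩ ⟨x, hx⟩}

lemma tronC_ne {T : SimpleGraph V} {v w : V} {hw : w ≠ v} {x : V}
    (hx : x ∈ tronC T v w hw) : x ≠ v := hx.1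

lemma tronC_extend {T : SimpleGraph V} {v w : V} {hw : w ≠ v} {x y : V}
    (hx : x ∈ tronC T v w hw) (hadj : T.Adj x y) (hy : y ≠ v) : y ∈ tronC T v w hw := by
  obtain ⟨hxv, hr⟩ := hx
  exact ⟨hy, hr.trans (SimpleGraph.Adj.reachable
    (show (T.induce {y : V | y ≠ v}).Adj ⟨x, hxv⟩ ⟨y, hy⟩ from hadj))⟩

/-- The hom from an induced subgraph back to the big graph. -/
def tronHom (T : SimpleGraph V) (s : Set V) : T.induce s →g T := ⟨Subtype.val, fun h => h⟩

/-- In an acyclic graph, the only neighbour of `v` in the component of `w` is `w`. -/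
lemma tronC_adj_v {T : SimpleGraph V} {v w : V} (hacyc : T.IsAcyclic) (hadjw : T.Adj v w)
    {u : V} (hadj : T.Adj v u) (hu : u ∈ tronC T v w hadjw.ne') : u = w := by
  obtain ⟨huv, hr⟩ := hu
  obtain ⟨q⟩ := hr
  set qT : T.Walk w u := q.map (tronHom T _) with hqT
  have hvq : v ∉ qT.support := by
    rw [show qT.support = q.support.map (tronHom T _) from SimpleGraph.Walk.support_map _ _]
    rintro hmem
    obtain ⟨z, _, hz⟩ := List.mem_map.mp hmem
    exact z.2 hz
  have hvq' : v ∉ (qT.toPath : T.Walk w u).support :=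
    fun hmem => hvq (SimpleGraph.Walk.support_toPath_subset qT hmem)
  have hp1 : (SimpleGraph.Walk.cons hadjw (qT.toPath : T.Walk w u)).IsPath := by
    rw [SimpleGraph.Walk.cons_isPath_iff]
    exact ⟨qT.toPath.2, hvq'⟩
  have hp2 : (SimpleGraph.Walk.cons hadj (SimpleGraph.Walk.nil : T.Walk u u)).IsPath := by
    rw [SimpleGraph.Walk.cons_isPath_iff]
    exact ⟨SimpleGraph.Walk.IsPath.nil, by simp [hadj.ne]⟩
  have := SimpleGraph.isAcyclic_iff_path_unique.mp hacyc
    ⟨SimpleGraph.Walk.cons hadjw (qT.toPath : T.Walk w u), hp1⟩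
    ⟨SimpleGraph.Walk.cons hadj (SimpleGraph.Walk.nil : T.Walk u u), hp2⟩
  have hsupp := congrArg (fun P : T.Path v u => (P : T.Walk v u).support) this
  simp only [SimpleGraph.Walk.support_cons, SimpleGraph.Walk.support_nil] at hsupp
  have : (qT.toPath : T.Walk w u).support = [u] := by
    injection hsupp
  have hw_mem := (qT.toPath : T.Walk w u).start_mem_support
  rw [this] at hw_mem
  exact (List.mem_singleton.mp hw_mem).symm

/-- The invariant for Alice's trajectory. -/
def AliceInv (T : SimpleGraph V) (v a : V) (sc : ℕ) (vis : Finset V) : Prop :=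
  (a = v ∧ sc = 1) ∨
  ∃ (u xe : {y : V // y ∈ {y : V | y ≠ v}}) (q : (T.induce {y : V | y ≠ v}).Walk u xe),
    T.Adj v u.val ∧ q.IsPath ∧ a = xe.val ∧ sc = q.support.length + 1 ∧
    ∀ z ∈ q.support, (z : V) ∈ vis

lemma aliceInv_mono {T : SimpleGraph V} {v a : V} {sc : ℕ} {vis vis' : Finset V}
    (hsub : vis ⊆ vis') (h : AliceInv T v a sc vis) : AliceInv T v a sc vis' := by
  rcases h with h | ⟨u, xe, q, h1, h2, h3, h4, h5⟩
  · exact Or.inl h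
  · exact Or.inr ⟨u, xe, q, h1, h2, h3, h4, fun z hz => hsub (h5 z hz)⟩

lemma aliceInv_step {T : SimpleGraph V} {v a y : V} {sc : ℕ} {vis : Finset V}
    (hvv : v ∈ vis) (h : AliceInv T v a sc vis) (hadj : T.Adj a y) (hy : y ∉ vis) :
    AliceInv T v y (sc + 1) (insert y vis) := by
  have hyv : y ≠ v := fun he => hy (he ▸ hvv)
  rcases h with ⟨rfl, rfl⟩ | ⟨u, xe, q, h1, h2, h3, h4, h5⟩
  · refine Or.inr ⟨⟨y, hyv⟩, ⟨y, hyv⟩, SimpleGraph.Walk.nil, hadj, SimpleGraph.Walk.IsPath.nil,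
      rfl, by simp, ?_⟩
    intro z hz
    simp only [SimpleGraph.Walk.support_nil, List.mem_singleton] at hz
    subst hz
    exact Finset.mem_insert_self _ _
  · have hadj' : (T.induce {y : V | y ≠ v}).Adj xe ⟨y, hyv⟩ := by rw [h3] at hadj; exact hadj
    have hynot : (⟨y, hyv⟩ : {y : V // y ∈ {y : V | y ≠ v}}) ∉ q.support := by
      intro hmem
      exact hy (h5 _ hmem)
    refine Or.inr ⟨u, ⟨y, hyv⟩, q.concat hadj', h1, tron_concat_isPath h2 hynot, rfl, ?_, ?_⟩
    · rw [SimpleGraph.Walk.support_concat, List.length_append, h4, List.length_singleton]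
    · intro z hz
      rw [SimpleGraph.Walk.support_concat, List.mem_append, List.mem_singleton] at hz
      rcases hz with hz | hz
      · exact Finset.mem_insert_of_mem (h5 z hz)
      · subst hz
        exact Finset.mem_insert_self _ _

lemma aliceInv_score {T : SimpleGraph V} {v a : V} {sc L : ℕ} {vis : Finset V}
    (hmax : ∀ u, (hu : T.Adj v u) →
      maxPathFrom (T.induce {x : V | x ≠ v}) ⟨u, hu.ne'⟩ ≤ L)
    (h : AliceInv T v a sc vis) : sc ≤ L + 1 := by
  rcases h with ⟨_, rfl⟩ | ⟨u, xe, q, h1, h2, _, h4, _⟩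
  · omega
  · have hle : q.support.length ≤ maxPathFrom (T.induce {x : V | x ≠ v}) u :=
      le_csSup (tron_bddAbove _ u) ⟨xe, q, h2, rfl⟩
    have h6 : maxPathFrom (T.induce {x : V | x ≠ v}) u ≤ L := hmax u.val h1
    omega



lemma tron_phase2 {T : SimpleGraph V} {v : V} {L : ℕ}
    (hmax : ∀ u, (hu : T.Adj v u) →
      maxPathFrom (T.induce {x : V | x ≠ v}) ⟨u, hu.ne'⟩ ≤ L) :
    ∀ (fuel : ℕ) (turn : Bool) (s : TronState V), v ∈ s.visited → L ≤ s.scoreB →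
      AliceInv T v s.posA s.scoreA s.visited →
      tronForceB T.Adj (fun a b => L ≤ b ∧ a ≤ L + 1) fuel turn s := by
  intro fuel
  induction fuel with
  | zero =>
    intro turn s h1 h2 h3
    exact ⟨h2, aliceInv_score hmax h3⟩
  | succ f ih =>
    intro turn s h1 h2 h3
    cases turn with
    | true =>
      simp only [tronForceB]
      by_cases hA : TronStuck T.Adj s.posA s.visited
      · rw [if_pos hA]
        by_cases hB : TronStuck T.Adj s.posB s.visited
        · rw [if_pos hB]; exact ⟨h2, aliceInv_score hmax h3⟩
        · rw [if_neg hB]; exact ih false s h1 h2 h3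
      · rw [if_neg hA]
        intro y hRy hy
        exact ih false ⟨y, s.posB, insert y s.visited, s.scoreA + 1, s.scoreB⟩
          (Finset.mem_insert_of_mem h1) h2 (aliceInv_step h1 h3 hRy hy)
    | false =>
      simp only [tronForceB]
      by_cases hB : TronStuck T.Adj s.posB s.visited
      · rw [if_pos hB]
        by_cases hA : TronStuck T.Adj s.posA s.visited
        · rw [if_pos hA]; exact ⟨h2, aliceInv_score hmax h3⟩
        · rw [if_neg hA]; exact ih true s h1 h2 h3
      · rw [if_neg hB]
        rw [TronStuck] at hB
        push_neg at hB
        obtain ⟨y, hRy, hy⟩ := hB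
        exact ⟨y, hRy, hy, ih true ⟨s.posA, y, insert y s.visited, s.scoreA, s.scoreB + 1⟩
          (Finset.mem_insert_of_mem h1) (le_trans h2 (Nat.le_succ _))
          (aliceInv_mono (Finset.subset_insert _ _) h3)⟩

lemma tron_phase1 {T : SimpleGraph V} {v w : V} {L : ℕ} (hacyc : T.IsAcyclic)
    (hadjw : T.Adj v w)
    (hmax : ∀ u, (hu : T.Adj v u) →
      maxPathFrom (T.induce {x : V | x ≠ v}) ⟨u, hu.ne'⟩ ≤ L) :
    ∀ (fuel : ℕ) (b xe : {y : V // y ∈ {y : V | y ≠ v}})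
      (r : (T.induce {y : V | y ≠ v}).Walk b xe) (turn : Bool) (s : TronState V),
      v ∈ s.visited → w ∈ s.visited → s.posB = b.val → s.scoreB + r.length = L →
      r.IsPath → (∀ z ∈ r.support, (z : V) ∈ tronC T v w hadjw.ne') →
      (∀ z ∈ r.support.tail, (z : V) ∉ s.visited) →
      AliceInv T v s.posA s.scoreA s.visited →
      s.posA ∉ tronC T v w hadjw.ne' →
      2 * r.length ≤ fuel + (if turn then 0 else 1) →
      tronForceB T.Adj (fun a b => L ≤ b ∧ a ≤ L + 1) fuel turn s := by
  intro fuel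
  induction fuel with
  | zero =>
    intro b xe r turn s h1 h2 h3 h4 h5 h6 h7 h8 h9 hfuel
    have hr0 : r.length = 0 := by split_ifs at hfuel <;> omega
    simp only [tronForceB]
    exact ⟨by omega, aliceInv_score hmax h8⟩
  | succ f ih =>
    intro b xe r turn s h1 h2 h3 h4 h5 h6 h7 h8 h9 hfuel
    cases r with
    | nil =>
      refine tron_phase2 hmax (f + 1) turn s h1 ?_ h8
      simp only [SimpleGraph.Walk.length_nil] at h4
      omega
    | @cons _ c _ hbc r' =>
      have hcmem : c ∈ (SimpleGraph.Walk.cons hbc r').support.tail := by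
        simp only [SimpleGraph.Walk.support_cons, List.tail_cons]
        exact r'.start_mem_support
      have hcvis : (c : V) ∉ s.visited := h7 c hcmem
      have hRbc : T.Adj s.posB c.val := by rw [h3]; exact hbc
      have hBns : ¬ TronStuck T.Adj s.posB s.visited := fun hst => hcvis (hst _ hRbc)
      have hsupC : ∀ z ∈ r'.support, (z : V) ∈ tronC T v w hadjw.ne' := by
        intro z hz
        refine h6 z ?_
        rw [SimpleGraph.Walk.support_cons]
        exact List.mem_cons_of_mem _ hz
      cases turn with
      | false =>
        simp only [tronForceB]
        rw [if_neg hBns]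
        refine ⟨c.val, hRbc, hcvis, ?_⟩
        refine ih c xe r' true ⟨s.posA, c.val, insert c.val s.visited, s.scoreA, s.scoreB + 1⟩
          (Finset.mem_insert_of_mem h1) (Finset.mem_insert_of_mem h2) rfl
          (by simp only [SimpleGraph.Walk.length_cons] at h4; show s.scoreB + 1 + r'.length = L; omega)
          h5.of_cons hsupC ?_
          (aliceInv_mono (Finset.subset_insert _ _) h8) h9
          (by simp [SimpleGraph.Walk.length_cons] at hfuel ⊢; omega)
        intro z hz
        have hz' : z ∈ r'.support := List.mem_of_mem_tail hz
        have hzc : z ≠ c := by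
          have hnodup := (h5.of_cons).support_nodup
          rw [r'.support_eq_cons] at hnodup
          intro he
          subst he
          exact (List.nodup_cons.mp hnodup).1 hz
        have hzvis : (z : V) ∉ s.visited := by
          apply h7
          simp only [SimpleGraph.Walk.support_cons, List.tail_cons]
          exact hz'
        rw [Finset.mem_insert]
        push_neg
        exact ⟨fun he => hzc (Subtype.ext he), hzvis⟩
      | true =>
        simp only [tronForceB]
        by_cases hA : TronStuck T.Adj s.posA s.visited
        · rw [if_pos hA, if_neg hBns]
          refine ih b xe (SimpleGraph.Walk.cons hbc r') false s h1 h2 h3 h4 h5 h6 h7 h8 h9 ?_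
          simp at hfuel ⊢
          omega
        · rw [if_neg hA]
          intro y hRy hy
          have hyv : y ≠ v := fun he => hy (he ▸ h1)
          have hyC : y ∉ tronC T v w hadjw.ne' := by
            intro hyCmem
            by_cases hav : s.posA = v
            · rw [hav] at hRy
              exact hy ((tronC_adj_v hacyc hadjw hRy hyCmem) ▸ h2)
            · exact h9 (tronC_extend hyCmem hRy.symm hav)
          refine ih b xe (SimpleGraph.Walk.cons hbc r') false
            ⟨y, s.posB, insert y s.visited, s.scoreA + 1, s.scoreB⟩
            (Finset.mem_insert_of_mem h1) (Finset.mem_insert_of_mem h2) h3 h4 h5 h6 ?_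
            (aliceInv_step h1 h8 hRy hy) hyC
            (by simp at hfuel ⊢; omega)
          intro z hz
          rw [Finset.mem_insert]
          push_neg
          refine ⟨fun he => hyC (he ▸ h6 z (List.mem_of_mem_tail hz)), h7 z hz⟩

end TronAux

/-- If Alice starts at `v` in a tree `T`, then Bob, starting
at a neighbour `w` of `v` maximizing the longest path from `w` in `T - v`
(with `l` vertices), can guarantee a score of at least `l` while forcing
Alice's score to be at most `l + 1`. -/
theorem tron_tree_bob_neighbour_strategy
    {V : Type} [Fintype V] [DecidableEq V] (T : SimpleGraph V)
    (hconn : T.Connected) (hacyc : T.IsAcyclic) (hcard : 2 ≤ Fintype.card V)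
    (v : V) :
    ∃ w, ∃ hw : T.Adj v w,
      (∀ u, (hu : T.Adj v u) →
        maxPathFrom (T.induce {x | x ≠ v}) ⟨u, hu.ne'⟩ ≤
          maxPathFrom (T.induce {x | x ≠ v}) ⟨w, hw.ne'⟩) ∧
      tronForceB T.Adj
        (fun a b => maxPathFrom (T.induce {x | x ≠ v}) ⟨w, hw.ne'⟩ ≤ b ∧
          a ≤ maxPathFrom (T.induce {x | x ≠ v}) ⟨w, hw.ne'⟩ + 1)
        (tronFuel V) true (tronInit v w) := by
  classical
  obtain ⟨u0, hu0⟩ : ∃ u0, T.Adj v u0 := by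
    obtain ⟨u, hu⟩ := Fintype.exists_ne_of_one_lt_card (by omega) v
    obtain ⟨p⟩ := hconn.preconnected v u
    cases p with
    | nil => exact absurd rfl hu
    | cons h q => exact ⟨_, h⟩
  obtain ⟨w, hwmem, hwmax⟩ := Finset.exists_max_image (T.neighborFinset v)
    (fun u => if h : T.Adj v u then maxPathFrom (T.induce {x : V | x ≠ v}) ⟨u, h.ne'⟩ else 0)
    ⟨u0, (T.mem_neighborFinset v u0).mpr hu0⟩
  have hw : T.Adj v w := (T.mem_neighborFinset v w).mp hwmem
  have hmax : ∀ u, (hu : T.Adj v u) →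
      maxPathFrom (T.induce {x : V | x ≠ v}) ⟨u, hu.ne'⟩ ≤
        maxPathFrom (T.induce {x : V | x ≠ v}) ⟨w, hw.ne'⟩ := by
    intro u hu
    have := hwmax u ((T.mem_neighborFinset v u).mpr hu)
    rw [dif_pos hu, dif_pos hw] at this
    exact this
  refine ⟨w, hw, hmax, ?_⟩
  have hLmem : maxPathFrom (T.induce {x : V | x ≠ v}) ⟨w, hw.ne'⟩ ∈
      {n | ∃ (x : _) (p : (T.induce {x : V | x ≠ v}).Walk ⟨w, hw.ne'⟩ x),
        p.IsPath ∧ n = p.support.length} :=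
    Nat.sSup_mem ⟨1, tron_one_mem _ _⟩ (tron_bddAbove _ _)
  obtain ⟨xe, p, hp, hlenL⟩ := hLmem
  have hcardL : p.support.length ≤ Fintype.card V :=
    le_trans hp.support_nodup.length_le_card
      (Fintype.card_le_of_injective Subtype.val Subtype.val_injective)
  have hLsupp : p.support.length = p.length + 1 := SimpleGraph.Walk.length_support p
  refine tron_phase1 hacyc hw hmax (tronFuel V) ⟨w, hw.ne'⟩ xe p true (tronInit v w)
    ?_ ?_ rfl ?_ hp ?_ ?_ (Or.inl ⟨rfl, rfl⟩) ?_ ?_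
  · exact Finset.mem_insert_self _ _
  · exact Finset.mem_insert_of_mem (Finset.mem_singleton_self _)
  · show 1 + p.length = _
    omega
  · intro z hz
    exact ⟨z.2, ⟨p.takeUntil z hz⟩⟩
  · intro z hz
    have hzw : z ≠ (⟨w, hw.ne'⟩ : {y : V // y ∈ {y : V | y ≠ v}}) := by
      have hnodup := hp.support_nodup
      rw [p.support_eq_cons] at hnodup
      intro he
      subst he
      exact (List.nodup_cons.mp hnodup).1 hz
    show (z : V) ∉ ({v, w} : Finset V)
    simp only [Finset.mem_insert, Finset.mem_singleton]
    push_neg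
    exact ⟨z.2, fun he => hzw (Subtype.ext he)⟩
  · rintro ⟨h, -⟩
    exact h rfl
  · show 2 * p.length ≤ tronFuel V + _
    simp only [if_true]
    rw [tronFuel]
    omega
end

section
/- Let G be a graph consisting of two disjoint paths, each with n vertices. In the Tron game on G, as n tends to infinity, the optimal ratio (Bob's score)/(Alice's score) tends to 2/(sqrt(5) - 1), the golden ratio. -/
/-- The disjoint union of two paths, each with `n` vertices. -/
def twoPaths (n : ℕ) : SimpleGraph (Fin n ⊕ Fin n) :=
  SimpleGraph.fromRel (fun x y =>
    match x, y with
    | Sum.inl a, Sum.inl b => a.val + 1 = b.val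
    | Sum.inr a, Sum.inr b => a.val + 1 = b.val
    | _, _ => False)

lemma twoPaths_adj_inl_inl (n : ℕ) (a b : Fin n) :
    (twoPaths n).Adj (.inl a) (.inl b) ↔ (a.val + 1 = b.val ∨ b.val + 1 = a.val) := by
  simp only [twoPaths, SimpleGraph.fromRel_adj]
  constructor
  · rintro ⟨h, h2⟩; exact h2
  · intro h
    refine ⟨fun heq => ?_, h⟩
    have := Sum.inl.inj heq
    subst this
    omega

lemma twoPaths_adj_inr_inr (n : ℕ) (a b : Fin n) :
    (twoPaths n).Adj (.inr a) (.inr b) ↔ (a.val + 1 = b.val ∨ b.val + 1 = a.val) := by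
  simp only [twoPaths, SimpleGraph.fromRel_adj]
  constructor
  · rintro ⟨h, h2⟩; exact h2
  · intro h
    refine ⟨fun heq => ?_, h⟩
    have := Sum.inr.inj heq
    subst this
    omega

lemma twoPaths_adj_inl_inr (n : ℕ) (a b : Fin n) : ¬ (twoPaths n).Adj (.inl a) (.inr b) := by
  simp [twoPaths, SimpleGraph.fromRel_adj]

lemma twoPaths_adj_inr_inl (n : ℕ) (a b : Fin n) : ¬ (twoPaths n).Adj (.inr a) (.inl b) := by
  simp [twoPaths, SimpleGraph.fromRel_adj]

lemma rayForceB {V : Type} [DecidableEq V] (R : V → V → Prop) (P : ℕ → ℕ → Prop)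
    (nxt : ℕ → V) (m : ℕ) (T : Finset V)
    (Hinj : ∀ i, i ≤ m → ∀ j, j ≤ m → nxt i = nxt j → i = j)
    (Hadj : ∀ k, k < m → R (nxt k) (nxt (k+1)))
    (Hdisj : ∀ j, j ≤ m → nxt j ∉ T)
    (HT : ∀ v ∈ T, ∀ w, R v w → w ∈ T ∨ w = nxt 0)
    (HP : ∀ a, 1 ≤ a → a ≤ T.card → P a (m+1)) :
    ∀ f k (S : Finset V) (posA : V) (sA : ℕ), k ≤ m → S ⊆ T → posA ∈ S →
      1 ≤ sA → sA ≤ S.card →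
      (∀ w, R (nxt m) w → (∃ j, j ≤ m ∧ w = nxt j) ∨ w ∈ S) →
      2 * ((m - k) + (T.card - S.card)) + 2 ≤ f →
      tronForceB R P f true ⟨posA, nxt k, (Finset.range (k+1)).image nxt ∪ S, sA, k+1⟩ := by
  intro f
  induction f using Nat.strong_induction_on with
  | _ f IH =>
  intro k S posA sA hk hST hpos hsA1 hsA hend hf
  set vis : Finset V := (Finset.range (k+1)).image nxt ∪ S with hvisdef
  have hray_mem : ∀ j, j ≤ k → nxt j ∈ vis := fun j hj =>
    Finset.mem_union_left _ (Finset.mem_image_of_mem _ (Finset.mem_range.mpr (by omega)))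
  have hunvis : ∀ j, k < j → j ≤ m → nxt j ∉ vis := by
    intro j hj1 hj2 hmem
    rcases Finset.mem_union.mp hmem with h | h
    · obtain ⟨i, hi, hij⟩ := Finset.mem_image.mp h
      have := Hinj i (by simp at hi; omega) j hj2 hij
      simp at hi; omega
    · exact Hdisj j hj2 (hST h)
  obtain ⟨f', rfl⟩ : ∃ f', f = f' + 1 := ⟨f - 1, by omega⟩
  rw [tronForceB]
  dsimp only
  by_cases hA : TronStuck R posA vis
  · rw [if_pos hA]
    by_cases hB : TronStuck R (nxt k) vis
    · rw [if_pos hB]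
      have hkm : k = m := by
        by_contra h
        exact hunvis (k+1) (by omega) (by omega) (hB _ (Hadj k (lt_of_le_of_ne hk h)))
      rw [hkm]
      exact HP sA hsA1 (hsA.trans (Finset.card_le_card hST))
    · rw [if_neg hB]
      have hkm : k < m := by
        rcases lt_or_eq_of_le hk with h | h
        · exact h
        · exfalso; apply hB; intro w' hw'
          rcases hend w' (h ▸ hw') with ⟨j, hj, rfl⟩ | hS
          · exact hray_mem j (by omega)
          · exact Finset.mem_union_right _ hS
      obtain ⟨f'', rfl⟩ : ∃ f'', f' = f'' + 1 := ⟨f' - 1, by omega⟩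
      rw [tronForceB]
      dsimp only
      rw [if_neg hB]
      refine ⟨nxt (k+1), Hadj k hkm, hunvis (k+1) (by omega) (by omega), ?_⟩
      have hvis2 : insert (nxt (k+1)) vis = (Finset.range (k+1+1)).image nxt ∪ S := by
        rw [hvisdef, Finset.range_add_one (n := k+1), Finset.image_insert, Finset.insert_union]
      rw [hvis2]
      exact IH f'' (by omega) (k+1) S posA sA (by omega) hST hpos hsA1 hsA hend (by omega)
  · rw [if_neg hA]
    intro w hRw hwvis
    have hwT : w ∈ T := by
      rcases HT posA (hST hpos) w hRw with h | h
      · exact h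
      · exact absurd (by rw [h]; exact hray_mem 0 (by omega)) hwvis
    have hwS : w ∉ S := fun h => hwvis (Finset.mem_union_right _ h)
    have hcard : S.card < T.card := by
      have h1 : insert w S ⊆ T := Finset.insert_subset hwT hST
      have h2 := Finset.card_le_card h1
      rw [Finset.card_insert_of_notMem hwS] at h2
      omega
    obtain ⟨f'', rfl⟩ : ∃ f'', f' = f'' + 1 := ⟨f' - 1, by omega⟩
    rw [tronForceB]
    dsimp only
    have hunvis' : ∀ j, k < j → j ≤ m → nxt j ∉ insert w vis := by
      intro j hj1 hj2 hmem
      rcases Finset.mem_insert.mp hmem with h | h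
      · exact Hdisj j hj2 (h ▸ hwT)
      · exact hunvis j hj1 hj2 h
    have hSubset' : insert w S ⊆ T := Finset.insert_subset hwT hST
    have hend' : ∀ w', R (nxt m) w' → (∃ j, j ≤ m ∧ w' = nxt j) ∨ w' ∈ insert w S := by
      intro w' hw'
      rcases hend w' hw' with h | h
      · exact Or.inl h
      · exact Or.inr (Finset.mem_insert_of_mem h)
    have hvis' : insert w vis = (Finset.range (k+1)).image nxt ∪ insert w S :=
      (Finset.union_insert _ _ _).symm
    by_cases hB : TronStuck R (nxt k) (insert w vis)
    · rw [if_pos hB]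
      have hkm : k = m := by
        by_contra h
        exact hunvis' (k+1) (by omega) (by omega) (hB _ (Hadj k (lt_of_le_of_ne hk h)))
      by_cases hA' : TronStuck R w (insert w vis)
      · rw [if_pos hA']
        rw [hkm]
        refine HP (sA+1) (by omega) ?_
        have h2 := Finset.card_le_card hSubset'
        rw [Finset.card_insert_of_notMem hwS] at h2
        omega
      · rw [if_neg hA']
        rw [hvis']
        refine IH f'' (by omega) k (insert w S) w (sA+1) hk hSubset'
          (Finset.mem_insert_self _ _) (by omega)
          (by rw [Finset.card_insert_of_notMem hwS]; omega) hend' (by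
            rw [Finset.card_insert_of_notMem hwS]; omega)
    · rw [if_neg hB]
      have hkm : k < m := by
        rcases lt_or_eq_of_le hk with h | h
        · exact h
        · exfalso; apply hB; intro w' hw'
          rcases hend w' (h ▸ hw') with ⟨j, hj, rfl⟩ | hS
          · exact Finset.mem_insert_of_mem (hray_mem j (by omega))
          · exact Finset.mem_insert_of_mem (Finset.mem_union_right _ hS)
      refine ⟨nxt (k+1), Hadj k hkm, hunvis' (k+1) (by omega) (by omega), ?_⟩
      have hvis2 : insert (nxt (k+1)) (insert w vis) =
          (Finset.range (k+1+1)).image nxt ∪ insert w S := by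
        rw [hvis']
        conv_rhs => rw [Finset.range_add_one]
        rw [Finset.image_insert, Finset.insert_union]
      rw [hvis2]
      refine IH f'' (by omega) (k+1) (insert w S) w (sA+1) (by omega) hSubset'
        (Finset.mem_insert_self _ _) (by omega)
        (by rw [Finset.card_insert_of_notMem hwS]; omega) hend' (by
          rw [Finset.card_insert_of_notMem hwS]; omega)

lemma rayForceA {V : Type} [DecidableEq V] (R : V → V → Prop) (P : ℕ → ℕ → Prop)
    (nxt : ℕ → V) (m : ℕ) (T : Finset V)
    (Hinj : ∀ i, i ≤ m → ∀ j, j ≤ m → nxt i = nxt j → i = j)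
    (Hadj : ∀ k, k < m → R (nxt k) (nxt (k+1)))
    (Hdisj : ∀ j, j ≤ m → nxt j ∉ T)
    (HT : ∀ v ∈ T, ∀ w, R v w → w ∈ T ∨ w = nxt 0)
    (HP : ∀ b, 1 ≤ b → b ≤ T.card → P (m+1) b) :
    ∀ f k (S : Finset V) (posB : V) (sB : ℕ), k ≤ m → S ⊆ T → posB ∈ S →
      1 ≤ sB → sB ≤ S.card →
      (∀ w, R (nxt m) w → (∃ j, j ≤ m ∧ w = nxt j) ∨ w ∈ S) →
      2 * ((m - k) + (T.card - S.card)) + 2 ≤ f →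
      tronForceA R P f true ⟨nxt k, posB, (Finset.range (k+1)).image nxt ∪ S, k+1, sB⟩ := by
  intro f
  induction f using Nat.strong_induction_on with
  | _ f IH =>
  intro k S posB sB hk hST hpos hsB1 hsB hend hf
  set vis : Finset V := (Finset.range (k+1)).image nxt ∪ S with hvisdef
  have hray_mem : ∀ j, j ≤ k → nxt j ∈ vis := fun j hj =>
    Finset.mem_union_left _ (Finset.mem_image_of_mem _ (Finset.mem_range.mpr (by omega)))
  have hunvis : ∀ j, k < j → j ≤ m → nxt j ∉ vis := by
    intro j hj1 hj2 hmem
    rcases Finset.mem_union.mp hmem with h | h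
    · obtain ⟨i, hi, hij⟩ := Finset.mem_image.mp h
      have := Hinj i (by simp at hi; omega) j hj2 hij
      simp at hi; omega
    · exact Hdisj j hj2 (hST h)
  obtain ⟨f', rfl⟩ : ∃ f', f = f' + 1 := ⟨f - 1, by omega⟩
  rw [tronForceA]
  dsimp only
  by_cases hA : TronStuck R (nxt k) vis
  · have hkm : k = m := by
      by_contra h
      exact hunvis (k+1) (by omega) (by omega) (hA _ (Hadj k (lt_of_le_of_ne hk h)))
    rw [if_pos hA]
    by_cases hB : TronStuck R posB vis
    · rw [if_pos hB]
      rw [hkm]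
      exact HP sB hsB1 (hsB.trans (Finset.card_le_card hST))
    · rw [if_neg hB]
      -- Bob has an unvisited neighbour, so T.card > S.card
      have hcard : S.card < T.card := by
        have h1 : ¬ ∀ w, R posB w → w ∈ vis := hB
        push_neg at h1
        obtain ⟨w, hRw, hwvis⟩ := h1
        have hwT : w ∈ T := by
          rcases HT posB (hST hpos) w hRw with h | h
          · exact h
          · exact absurd (by rw [h]; exact hray_mem 0 (by omega)) hwvis
        have hwS : w ∉ S := fun h => hwvis (Finset.mem_union_right _ h)
        have h2 := Finset.card_le_card (Finset.insert_subset hwT hST)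
        rw [Finset.card_insert_of_notMem hwS] at h2
        omega
      obtain ⟨f'', rfl⟩ : ∃ f'', f' = f'' + 1 := ⟨f' - 1, by omega⟩
      rw [tronForceA]
      dsimp only
      rw [if_neg hB]
      intro w hRw hwvis
      have hwT : w ∈ T := by
        rcases HT posB (hST hpos) w hRw with h | h
        · exact h
        · exact absurd (by rw [h]; exact hray_mem 0 (by omega)) hwvis
      have hwS : w ∉ S := fun h => hwvis (Finset.mem_union_right _ h)
      have hvis' : insert w vis = (Finset.range (k+1)).image nxt ∪ insert w S :=
        (Finset.union_insert _ _ _).symm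
      rw [hvis']
      refine IH f'' (by omega) k (insert w S) w (sB+1) hk
        (Finset.insert_subset hwT hST) (Finset.mem_insert_self _ _) (by omega)
        (by rw [Finset.card_insert_of_notMem hwS]; omega)
        (fun w' hw' => (hend w' hw').imp id Finset.mem_insert_of_mem)
        (by rw [Finset.card_insert_of_notMem hwS]; omega)
  · rw [if_neg hA]
    have hkm : k < m := by
      rcases lt_or_eq_of_le hk with h | h
      · exact h
      · exfalso; apply hA; intro w' hw'
        rcases hend w' (h ▸ hw') with ⟨j, hj, rfl⟩ | hS
        · exact hray_mem j (by omega)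
        · exact Finset.mem_union_right _ hS
    refine ⟨nxt (k+1), Hadj k hkm, hunvis (k+1) (by omega) (by omega), ?_⟩
    obtain ⟨f'', rfl⟩ : ∃ f'', f' = f'' + 1 := ⟨f' - 1, by omega⟩
    rw [tronForceA]
    dsimp only
    have hvis2 : insert (nxt (k+1)) vis = (Finset.range (k+1+1)).image nxt ∪ S := by
      rw [hvisdef]
      conv_rhs => rw [Finset.range_add_one]
      rw [Finset.image_insert, Finset.insert_union]
    have hunvis2 : ∀ j, k+1 < j → j ≤ m → nxt j ∉ insert (nxt (k+1)) vis := by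
      intro j hj1 hj2 hmem
      rcases Finset.mem_insert.mp hmem with h | h
      · have := Hinj j hj2 (k+1) (by omega) h
        omega
      · exact hunvis j (by omega) hj2 h
    by_cases hB : TronStuck R posB (insert (nxt (k+1)) vis)
    · rw [if_pos hB]
      by_cases hA' : TronStuck R (nxt (k+1)) (insert (nxt (k+1)) vis)
      · rw [if_pos hA']
        have hkm2 : k + 1 = m := by
          by_contra h
          exact hunvis2 (k+2) (by omega) (by omega)
            (hA' _ (Hadj (k+1) (by omega)))
        rw [hkm2]
        exact HP sB hsB1 (hsB.trans (Finset.card_le_card hST))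
      · rw [if_neg hA']
        rw [hvis2]
        exact IH f'' (by omega) (k+1) S posB sB (by omega) hST hpos hsB1 hsB hend (by omega)
    · rw [if_neg hB]
      intro w hRw hwvis
      have hwT : w ∈ T := by
        rcases HT posB (hST hpos) w hRw with h | h
        · exact h
        · exact absurd (by rw [h]; exact Finset.mem_insert_of_mem (hray_mem 0 (by omega))) hwvis
      have hwS : w ∉ S := fun h => hwvis (Finset.mem_insert_of_mem (Finset.mem_union_right _ h))
      have hvis3 : insert w (insert (nxt (k+1)) vis) =
          (Finset.range (k+1+1)).image nxt ∪ insert w S := by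
        rw [hvis2, Finset.union_insert]
      rw [hvis3]
      refine IH f'' (by omega) (k+1) (insert w S) w (sB+1) (by omega)
        (Finset.insert_subset hwT hST) (Finset.mem_insert_self _ _) (by omega)
        (by rw [Finset.card_insert_of_notMem hwS]; omega)
        (fun w' hw' => (hend w' hw').imp id Finset.mem_insert_of_mem)
        (by rw [Finset.card_insert_of_notMem hwS]; omega)

lemma otherPathB {V : Type} [DecidableEq V] (R : V → V → Prop) (P : ℕ → ℕ → Prop)
    (n : ℕ) (fp gp : ℕ → V)
    (Hfinj : ∀ i, i < n → ∀ j, j < n → fp i = fp j → i = j)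
    (Hginj : ∀ i, i < n → ∀ j, j < n → gp i = gp j → i = j)
    (Hfg : ∀ i j, fp i ≠ gp j)
    (Hfadj : ∀ i j, i < n → j < n → (j = i+1 ∨ j+1 = i) → R (fp i) (fp j))
    (Hgadj : ∀ k, k + 1 < n → R (gp k) (gp (k+1)))
    (HfNbr : ∀ i, i < n → ∀ w, R (fp i) w → ∃ j, j < n ∧ (j = i+1 ∨ j+1 = i) ∧ w = fp j)
    (HgNbr : ∀ i, i < n → ∀ w, R (gp i) w → ∃ j, j < n ∧ (j = i+1 ∨ j+1 = i) ∧ w = gp j) :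
    ∀ f iA jA pA kB, iA ≤ jA → jA < n → (pA = iA ∨ pA = jA) → kB < n →
      (pA = iA → P (jA + 1) n) → (pA = jA → P (n - iA) n) →
      2 * ((n - (jA - iA + 1)) + (n - 1 - kB)) + 2 ≤ f →
      tronForceB R P f true ⟨fp pA, gp kB,
        (Finset.Icc iA jA).image fp ∪ (Finset.range (kB+1)).image gp,
        jA - iA + 1, kB + 1⟩ := by
  have hfvis : ∀ iA jA kB j, iA ≤ j → j ≤ jA →
      fp j ∈ (Finset.Icc iA jA).image fp ∪ (Finset.range (kB+1)).image gp := by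
    intro iA jA kB j h1 h2
    exact Finset.mem_union_left _ (Finset.mem_image_of_mem _ (Finset.mem_Icc.mpr ⟨h1, h2⟩))
  have hgvis : ∀ iA jA kB j, j ≤ kB →
      gp j ∈ (Finset.Icc iA jA).image fp ∪ (Finset.range (kB+1)).image gp := by
    intro iA jA kB j h1
    exact Finset.mem_union_right _ (Finset.mem_image_of_mem _ (Finset.mem_range.mpr (by omega)))
  have hfnot : ∀ iA jA kB j, j < n → jA < n → ¬(iA ≤ j ∧ j ≤ jA) →
      fp j ∉ (Finset.Icc iA jA).image fp ∪ (Finset.range (kB+1)).image gp := by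
    intro iA jA kB j hj hjA hout hmem
    rcases Finset.mem_union.mp hmem with h | h
    · obtain ⟨i, hi, hij⟩ := Finset.mem_image.mp h
      rw [Finset.mem_Icc] at hi
      have := Hfinj i (by omega) j hj hij
      omega
    · obtain ⟨i, hi, hij⟩ := Finset.mem_image.mp h
      exact Hfg j i hij.symm
  have hgnot : ∀ iA jA kB j, j < n → kB < j →
      gp j ∉ (Finset.Icc iA jA).image fp ∪ (Finset.range (kB+1)).image gp := by
    intro iA jA kB j hj hout hmem
    rcases Finset.mem_union.mp hmem with h | h
    · obtain ⟨i, hi, hij⟩ := Finset.mem_image.mp h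
      exact Hfg i j hij
    · obtain ⟨i, hi, hij⟩ := Finset.mem_image.mp h
      rw [Finset.mem_range] at hi
      have hi' : i < n := by omega
      have := Hginj i hi' j hj hij
      omega
  intro f
  induction f using Nat.strong_induction_on with
  | _ f IH =>
  intro iA jA pA kB hij hjn hpA hkn Hl Hr hf
  set vis : Finset V := (Finset.Icc iA jA).image fp ∪ (Finset.range (kB+1)).image gp with hvisdef
  have hpAn : pA < n := by rcases hpA with rfl | rfl <;> omega
  -- Bob not stuck iff kB+1 < n
  have hBnotstuck : kB + 1 < n → ¬ TronStuck R (gp kB) vis := by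
    intro h hstuck
    exact hgnot iA jA kB (kB+1) h (by omega) (hstuck _ (Hgadj kB h))
  have hBstuck : kB + 1 = n → TronStuck R (gp kB) vis := by
    intro h w hw
    obtain ⟨j, hj, hj2, rfl⟩ := HgNbr kB (by omega) w hw
    exact hgvis iA jA kB j (by omega)
  obtain ⟨f', rfl⟩ : ∃ f', f = f' + 1 := ⟨f - 1, by omega⟩
  rw [tronForceB]
  dsimp only
  by_cases hA : TronStuck R (fp pA) vis
  · rw [if_pos hA]
    -- derive end conditions from Alice being stuck
    have hAend : (pA = iA → iA = 0) ∧ (pA = jA → jA = n - 1) := by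
      constructor
      · intro hpi
        by_contra h
        exact hfnot iA jA kB (iA-1) (by omega) hjn (by omega)
          (hA _ (Hfadj pA (iA-1) (by omega) (by omega) (by omega)))
      · intro hpj
        by_contra h
        exact hfnot iA jA kB (jA+1) (by omega) hjn (by omega)
          (hA _ (Hfadj pA (jA+1) (by omega) (by omega) (by omega)))
    by_cases hB : TronStuck R (gp kB) vis
    · rw [if_pos hB]
      have hkB : kB + 1 = n := by
        by_contra h
        exact hBnotstuck (by omega) hB
      rcases hpA with hpi | hpj
      · have h0 : iA = 0 := hAend.1 hpi
        have := Hl hpi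
        have e1 : jA - iA + 1 = jA + 1 := by omega
        rw [e1, hkB]
        exact this
      · have h1 : jA = n - 1 := hAend.2 hpj
        have := Hr hpj
        have e1 : jA - iA + 1 = n - iA := by omega
        rw [e1, hkB]
        exact this
    · rw [if_neg hB]
      have hkB : kB + 1 < n := by
        by_contra h
        exact hB (hBstuck (by omega))
      obtain ⟨f'', rfl⟩ : ∃ f'', f' = f'' + 1 := ⟨f' - 1, by omega⟩
      rw [tronForceB]
      dsimp only
      rw [if_neg hB]
      refine ⟨gp (kB+1), Hgadj kB hkB, hgnot iA jA kB (kB+1) hkB (by omega), ?_⟩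
      have hv2 : insert (gp (kB+1)) vis =
          (Finset.Icc iA jA).image fp ∪ (Finset.range (kB+1+1)).image gp := by
        rw [hvisdef]
        conv_rhs => rw [Finset.range_add_one]
        rw [Finset.image_insert, Finset.union_insert]
      rw [hv2]
      exact IH f'' (by omega) iA jA pA (kB+1) hij hjn hpA hkB Hl Hr (by omega)
  · rw [if_neg hA]
    intro w hRw hwvis
    obtain ⟨j, hjlt, hjadj, rfl⟩ := HfNbr pA hpAn w hRw
    have hjout : ¬(iA ≤ j ∧ j ≤ jA) := by
      intro hin
      exact hwvis (hfvis iA jA kB j hin.1 hin.2)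
    -- determine the new interval
    obtain ⟨iA', jA', hle', hlt', hpa', hsz, hvis', Hl', Hr'⟩ :
        ∃ iA' jA', iA' ≤ jA' ∧ jA' < n ∧ (j = iA' ∨ j = jA') ∧
          (jA' - iA' + 1 = jA - iA + 1 + 1) ∧
          (insert (fp j) vis =
            (Finset.Icc iA' jA').image fp ∪ (Finset.range (kB+1)).image gp) ∧
          (j = iA' → P (jA' + 1) n) ∧ (j = jA' → P (n - iA') n) := by
      rcases hjadj with h | h
      · -- j = pA + 1, so pA = jA and j = jA + 1
        have hpj : pA = jA := by
          rcases hpA with hpi | hpj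
          · by_contra h2
            exact hjout (by omega)
          · exact hpj
        refine ⟨iA, jA + 1, by omega, by omega, Or.inr (by omega), by omega, ?_, ?_, ?_⟩
        · rw [hvisdef]
          have : Finset.Icc iA (jA+1) = insert (jA+1) (Finset.Icc iA jA) := by
            ext x
            simp only [Finset.mem_Icc, Finset.mem_insert]
            omega
          rw [this, Finset.image_insert, Finset.insert_union]
          have : j = jA + 1 := by omega
          rw [this]
        · intro hj0; omega
        · intro _
          have := Hr hpj
          have heq : n - iA = n - iA := rfl
          exact this
      · -- j + 1 = pA, so pA = iA and j = iA - 1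
        have hpj : pA = iA := by
          rcases hpA with hpi | hpj
          · exact hpi
          · by_contra h2
            exact hjout (by omega)
        refine ⟨iA - 1, jA, by omega, hjn, Or.inl (by omega), by omega, ?_, ?_, ?_⟩
        · rw [hvisdef]
          have h1 : Finset.Icc (iA-1) jA = insert (iA-1) (Finset.Icc iA jA) := by
            ext x
            simp only [Finset.mem_Icc, Finset.mem_insert]
            omega
          rw [h1, Finset.image_insert, Finset.insert_union]
          have : j = iA - 1 := by omega
          rw [this]
        · intro _
          have hj1 : jA + 1 = jA + 1 := rfl
          exact Hl hpj
        · intro hj0; omega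
    have hsA : jA - iA + 1 + 1 = jA' - iA' + 1 := hsz.symm
    rw [hvis', hsA]
    -- now Bob's (false) layer
    obtain ⟨f'', rfl⟩ : ∃ f'', f' = f'' + 1 := ⟨f' - 1, by omega⟩
    rw [tronForceB]
    dsimp only
    by_cases hB : TronStuck R (gp kB)
        ((Finset.Icc iA' jA').image fp ∪ (Finset.range (kB+1)).image gp)
    · rw [if_pos hB]
      have hkB : kB + 1 = n := by
        by_contra h
        exact hgnot iA' jA' kB (kB+1) (by omega) (by omega) (hB _ (Hgadj kB (by omega)))
      by_cases hA' : TronStuck R (fp j)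
          ((Finset.Icc iA' jA').image fp ∪ (Finset.range (kB+1)).image gp)
      · rw [if_pos hA']
        rcases hpa' with hpi | hpj
        · have h0 : j = 0 := by
            by_contra h
            exact hfnot iA' jA' kB (j-1) (by omega) hlt' (by omega)
              (hA' _ (Hfadj j (j-1) (by omega) (by omega) (by omega)))
          have := Hl' hpi
          have e1 : jA' - iA' + 1 = jA' + 1 := by omega
          rw [e1, hkB]
          exact this
        · have h1 : j = n - 1 := by
            by_contra h
            exact hfnot iA' jA' kB (j+1) (by omega) hlt' (by omega)
              (hA' _ (Hfadj j (j+1) (by omega) (by omega) (by omega)))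
          have := Hr' hpj
          have e1 : jA' - iA' + 1 = n - iA' := by omega
          rw [e1, hkB]
          exact this
      · rw [if_neg hA']
        exact IH f'' (by omega) iA' jA' j kB hle' hlt' hpa' hkn Hl' Hr' (by omega)
    · rw [if_neg hB]
      have hkB : kB + 1 < n := by
        by_contra h
        apply hB
        intro w hw
        obtain ⟨j2, hj2, hj22, rfl⟩ := HgNbr kB (by omega) w hw
        exact hgvis iA' jA' kB j2 (by omega)
      refine ⟨gp (kB+1), Hgadj kB hkB, hgnot iA' jA' kB (kB+1) hkB (by omega), ?_⟩
      have hv2 : insert (gp (kB+1))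
          ((Finset.Icc iA' jA').image fp ∪ (Finset.range (kB+1)).image gp) =
          (Finset.Icc iA' jA').image fp ∪ (Finset.range (kB+1+1)).image gp := by
        conv_rhs => rw [Finset.range_add_one]
        rw [Finset.image_insert, Finset.union_insert]
      rw [hv2]
      exact IH f'' (by omega) iA' jA' j (kB+1) hle' hlt' hpa' hkB Hl' Hr' (by omega)

lemma bob_block_up {V : Type} [DecidableEq V] (R : V → V → Prop) (P : ℕ → ℕ → Prop)
    (n : ℕ) (fp : ℕ → V)
    (Hfinj : ∀ i, i < n → ∀ j, j < n → fp i = fp j → i = j)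
    (Hfadj : ∀ i j, i < n → j < n → (j = i+1 ∨ j+1 = i) → R (fp i) (fp j))
    (HfNbr : ∀ i, i < n → ∀ w, R (fp i) w → ∃ j, j < n ∧ (j = i+1 ∨ j+1 = i) ∧ w = fp j)
    (a : ℕ) (ha : a + 1 < n)
    (HP : ∀ x, 1 ≤ x → x ≤ a + 1 → P x (n - 1 - a))
    (f : ℕ) (hf : 2 * (n - 2) + 2 ≤ f) :
    tronForceB R P f true ⟨fp a, fp (a+1), {fp a, fp (a+1)}, 1, 1⟩ := by
  classical
  set T : Finset V := (Finset.range (a+1)).image fp with hT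
  have hTcard : T.card = a + 1 := by
    rw [hT, Finset.card_image_of_injOn, Finset.card_range]
    intro i hi j hj h
    simp only [Finset.mem_coe, Finset.mem_range] at hi hj
    exact Hfinj i (by omega) j (by omega) h
  have hTmem : ∀ c, c < n → (fp c ∈ T ↔ c < a + 1) := by
    intro c hc
    rw [hT]
    constructor
    · intro h
      obtain ⟨i, hi, hie⟩ := Finset.mem_image.mp h
      rw [Finset.mem_range] at hi
      have := Hfinj i (by omega) c hc hie
      omega
    · intro h
      exact Finset.mem_image_of_mem _ (Finset.mem_range.mpr h)
  have hvis : ({fp a, fp (a+1)} : Finset V) =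
      (Finset.range (0+1)).image (fun k => fp (a+1+k)) ∪ {fp a} := by
    ext x
    simp [Finset.mem_insert, Finset.mem_union, Finset.mem_image]
    try tauto
  rw [hvis]
  refine rayForceB R P (fun k => fp (a+1+k)) (n-2-a) T ?_ ?_ ?_ ?_ ?_ f 0 {fp a} (fp a) 1
    (by omega) ?_ (Finset.mem_singleton_self _) le_rfl (by simp) ?_ ?_
  · intro i hi j hj h
    have := Hfinj (a+1+i) (by omega) (a+1+j) (by omega) h
    omega
  · intro k hk
    exact Hfadj (a+1+k) (a+1+(k+1)) (by omega) (by omega) (by omega)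
  · intro j hj hmem
    rw [hTmem (a+1+j) (by omega)] at hmem
    omega
  · intro v hv w hRw
    obtain ⟨i, hi, hie⟩ := Finset.mem_image.mp (hT ▸ hv)
    rw [Finset.mem_range] at hi
    obtain ⟨j, hjn, hjadj, rfl⟩ := HfNbr i (by omega) w (by rw [← hie] at hRw; exact hRw)
    by_cases hja : j < a + 1
    · exact Or.inl ((hTmem j hjn).mpr hja)
    · right
      have hje : j = a + 1 := by omega
      rw [hje]
  · intro x hx1 hx2
    have he : n - 2 - a + 1 = n - 1 - a := by omega
    rw [he]
    exact HP x hx1 (by omega)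
  · intro x hx
    rw [Finset.mem_singleton] at hx
    rw [hx]
    exact (hTmem a (by omega)).mpr (by omega)
  · intro w hRw
    have hRw' : R (fp (n-1)) w := by
      have he2 : a + 1 + (n-2-a) = n - 1 := by omega
      rw [← he2]
      exact hRw
    obtain ⟨j, hjn, hjadj, rfl⟩ := HfNbr (n-1) (by omega) w hRw'
    have hje : j = n - 2 := by omega
    by_cases hcase : a + 1 ≤ n - 2
    · left
      refine ⟨n-2-(a+1), by omega, ?_⟩
      show fp j = fp (a+1+(n-2-(a+1)))
      rw [hje, show a+1+(n-2-(a+1)) = n - 2 by omega]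
    · right
      rw [Finset.mem_singleton, hje, show n - 2 = a by omega]
  · rw [hTcard, Finset.card_singleton]
    omega

lemma bob_block_down {V : Type} [DecidableEq V] (R : V → V → Prop) (P : ℕ → ℕ → Prop)
    (n : ℕ) (fp : ℕ → V)
    (Hfinj : ∀ i, i < n → ∀ j, j < n → fp i = fp j → i = j)
    (Hfadj : ∀ i j, i < n → j < n → (j = i+1 ∨ j+1 = i) → R (fp i) (fp j))
    (HfNbr : ∀ i, i < n → ∀ w, R (fp i) w → ∃ j, j < n ∧ (j = i+1 ∨ j+1 = i) ∧ w = fp j)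
    (a : ℕ) (ha1 : 1 ≤ a) (ha : a < n)
    (HP : ∀ x, 1 ≤ x → x ≤ n - a → P x a)
    (f : ℕ) (hf : 2 * (n - 2) + 2 ≤ f) :
    tronForceB R P f true ⟨fp a, fp (a-1), {fp a, fp (a-1)}, 1, 1⟩ := by
  classical
  set T : Finset V := (Finset.Ico a n).image fp with hT
  have hTcard : T.card = n - a := by
    rw [hT, Finset.card_image_of_injOn, Nat.card_Ico]
    intro i hi j hj h
    simp only [Finset.mem_coe, Finset.mem_Ico] at hi hj
    exact Hfinj i (by omega) j (by omega) h
  have hTmem : ∀ c, c < n → (fp c ∈ T ↔ a ≤ c) := by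
    intro c hc
    rw [hT]
    constructor
    · intro h
      obtain ⟨i, hi, hie⟩ := Finset.mem_image.mp h
      rw [Finset.mem_Ico] at hi
      have := Hfinj i (by omega) c hc hie
      omega
    · intro h
      exact Finset.mem_image_of_mem _ (Finset.mem_Ico.mpr ⟨h, hc⟩)
  have hvis : ({fp a, fp (a-1)} : Finset V) =
      (Finset.range (0+1)).image (fun k => fp (a-1-k)) ∪ {fp a} := by
    ext x
    simp [Finset.mem_insert, Finset.mem_union, Finset.mem_image]
    try tauto
  rw [hvis]
  have hres := rayForceB R P (fun k => fp (a-1-k)) (a-1) T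
    (by
      intro i hi j hj h
      have := Hfinj (a-1-i) (by omega) (a-1-j) (by omega) h
      omega)
    (by
      intro k hk
      exact Hfadj (a-1-k) (a-1-(k+1)) (by omega) (by omega) (by omega))
    (by
      intro j hj hmem
      rw [hTmem (a-1-j) (by omega)] at hmem
      omega)
    (by
      intro v hv w hRw
      obtain ⟨i, hi, hie⟩ := Finset.mem_image.mp (hT ▸ hv)
      rw [Finset.mem_Ico] at hi
      obtain ⟨j, hjn, hjadj, rfl⟩ := HfNbr i (by omega) w (by rw [← hie] at hRw; exact hRw)
      by_cases hja : a ≤ j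
      · exact Or.inl ((hTmem j hjn).mpr hja)
      · right
        have hje : j = a - 1 := by omega
        show fp j = fp (a-1-0)
        rw [hje, show a-1-0 = a-1 by omega])
    (by
      intro x hx1 hx2
      have he : a - 1 + 1 = a := by omega
      rw [he]
      exact HP x hx1 (by omega))
    f 0 {fp a} (fp a) 1 (by omega)
    (by
      intro x hx
      rw [Finset.mem_singleton] at hx
      rw [hx]
      exact (hTmem a (by omega)).mpr (by omega))
    (Finset.mem_singleton_self _) le_rfl (by simp)
    (by
      intro w hRw
      have hRw' : R (fp 0) w := by
        have he2 : a - 1 - (a-1) = 0 := by omega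
        rw [← he2]
        exact hRw
      obtain ⟨j, hjn, hjadj, rfl⟩ := HfNbr 0 (by omega) w hRw'
      have hje : j = 1 := by omega
      by_cases hcase : 2 ≤ a
      · left
        refine ⟨a-2, by omega, ?_⟩
        show fp j = fp (a-1-(a-2))
        rw [hje, show a-1-(a-2) = 1 by omega]
      · right
        rw [Finset.mem_singleton, hje, show (1:ℕ) = a by omega])
    (by
      rw [hTcard, Finset.card_singleton]
      omega)
  exact hres

lemma bob_other {V : Type} [DecidableEq V] (R : V → V → Prop) (P : ℕ → ℕ → Prop)
    (n : ℕ) (fp gp : ℕ → V)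
    (Hfinj : ∀ i, i < n → ∀ j, j < n → fp i = fp j → i = j)
    (Hginj : ∀ i, i < n → ∀ j, j < n → gp i = gp j → i = j)
    (Hfg : ∀ i j, fp i ≠ gp j)
    (Hfadj : ∀ i j, i < n → j < n → (j = i+1 ∨ j+1 = i) → R (fp i) (fp j))
    (Hgadj : ∀ k, k + 1 < n → R (gp k) (gp (k+1)))
    (HfNbr : ∀ i, i < n → ∀ w, R (fp i) w → ∃ j, j < n ∧ (j = i+1 ∨ j+1 = i) ∧ w = fp j)
    (HgNbr : ∀ i, i < n → ∀ w, R (gp i) w → ∃ j, j < n ∧ (j = i+1 ∨ j+1 = i) ∧ w = gp j)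
    (a : ℕ) (ha : a < n)
    (Hl : P (a+1) n) (Hr : P (n-a) n)
    (f : ℕ) (hf : 2 * ((n-1) + (n-1)) + 2 ≤ f) :
    tronForceB R P f true ⟨fp a, gp 0, {fp a, gp 0}, 1, 1⟩ := by
  have hres := otherPathB R P n fp gp Hfinj Hginj Hfg Hfadj Hgadj HfNbr HgNbr
    f a a a 0 le_rfl ha (Or.inl rfl) (by omega) (fun _ => Hl) (fun _ => Hr) (by omega)
  have hv : (Finset.Icc a a).image fp ∪ (Finset.range (0+1)).image gp
      = ({fp a, gp 0} : Finset V) := by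
    ext x
    simp [Finset.Icc_self]
  rw [hv, show a - a + 1 = 1 by omega] at hres
  exact hres

lemma alice_ray_up {V : Type} [DecidableEq V] (R : V → V → Prop) (P : ℕ → ℕ → Prop)
    (n : ℕ) (fp : ℕ → V)
    (Hfinj : ∀ i, i < n → ∀ j, j < n → fp i = fp j → i = j)
    (Hfadj : ∀ i j, i < n → j < n → (j = i+1 ∨ j+1 = i) → R (fp i) (fp j))
    (HfNbr : ∀ i, i < n → ∀ w, R (fp i) w → ∃ j, j < n ∧ (j = i+1 ∨ j+1 = i) ∧ w = fp j)
    (x : ℕ) (hx : x + 2 ≤ n) (T : Finset V) (w0 : V) (hw0 : w0 ∈ T)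
    (HTray : ∀ j, x ≤ j → j < n → fp j ∉ T)
    (HT : ∀ v ∈ T, ∀ w, R v w → w ∈ T ∨ w = fp x)
    (HP : ∀ b, 1 ≤ b → b ≤ T.card → P (n - x) b)
    (f : ℕ) (hf : 2 * ((n - 1 - x) + (T.card - 1)) + 2 ≤ f) :
    tronForceA R P f true ⟨fp x, w0, {fp x, w0}, 1, 1⟩ := by
  classical
  have hvis : ({fp x, w0} : Finset V) =
      (Finset.range (0+1)).image (fun k => fp (x+k)) ∪ {w0} := by
    ext y
    simp [Finset.mem_insert, Finset.mem_union, Finset.mem_image]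
    try tauto
  rw [hvis]
  have hres := rayForceA R P (fun k => fp (x+k)) (n-1-x) T
    (by
      intro i hi j hj h
      have := Hfinj (x+i) (by omega) (x+j) (by omega) h
      omega)
    (by
      intro k hk
      exact Hfadj (x+k) (x+(k+1)) (by omega) (by omega) (by omega))
    (by
      intro j hj hmem
      exact HTray (x+j) (by omega) (by omega) hmem)
    (by
      intro v hv w hRw
      rcases HT v hv w hRw with h | h
      · exact Or.inl h
      · right
        rw [h]
        show fp x = fp (x+0)
        rw [show x + 0 = x by omega])
    (by
      intro b hb1 hb2
      rw [show n - 1 - x + 1 = n - x by omega]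
      exact HP b hb1 hb2)
    f 0 {w0} w0 1 (by omega)
    (by
      intro y hy
      rw [Finset.mem_singleton] at hy
      rw [hy]
      exact hw0)
    (Finset.mem_singleton_self _) le_rfl (by simp)
    (by
      intro w hRw
      have hRw' : R (fp (n-1)) w := by
        have he2 : x + (n-1-x) = n - 1 := by omega
        rw [← he2]
        exact hRw
      obtain ⟨j, hjn, hjadj, rfl⟩ := HfNbr (n-1) (by omega) w hRw'
      have hje : j = n - 2 := by omega
      left
      refine ⟨n-2-x, by omega, ?_⟩
      show fp j = fp (x+(n-2-x))
      rw [hje, show x+(n-2-x) = n - 2 by omega])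
    (by
      rw [Finset.card_singleton]
      omega)
  exact hres

lemma alice_ray_down {V : Type} [DecidableEq V] (R : V → V → Prop) (P : ℕ → ℕ → Prop)
    (n : ℕ) (fp : ℕ → V)
    (Hfinj : ∀ i, i < n → ∀ j, j < n → fp i = fp j → i = j)
    (Hfadj : ∀ i j, i < n → j < n → (j = i+1 ∨ j+1 = i) → R (fp i) (fp j))
    (HfNbr : ∀ i, i < n → ∀ w, R (fp i) w → ∃ j, j < n ∧ (j = i+1 ∨ j+1 = i) ∧ w = fp j)
    (x : ℕ) (hx1 : 1 ≤ x) (hx : x < n) (T : Finset V) (w0 : V) (hw0 : w0 ∈ T)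
    (HTray : ∀ j, j ≤ x → fp j ∉ T)
    (HT : ∀ v ∈ T, ∀ w, R v w → w ∈ T ∨ w = fp x)
    (HP : ∀ b, 1 ≤ b → b ≤ T.card → P (x + 1) b)
    (f : ℕ) (hf : 2 * (x + (T.card - 1)) + 2 ≤ f) :
    tronForceA R P f true ⟨fp x, w0, {fp x, w0}, 1, 1⟩ := by
  classical
  have hvis : ({fp x, w0} : Finset V) =
      (Finset.range (0+1)).image (fun k => fp (x-k)) ∪ {w0} := by
    ext y
    simp [Finset.mem_insert, Finset.mem_union, Finset.mem_image]
    try tauto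
  rw [hvis]
  have hres := rayForceA R P (fun k => fp (x-k)) x T
    (by
      intro i hi j hj h
      have := Hfinj (x-i) (by omega) (x-j) (by omega) h
      omega)
    (by
      intro k hk
      exact Hfadj (x-k) (x-(k+1)) (by omega) (by omega) (by omega))
    (by
      intro j hj hmem
      exact HTray (x-j) (by omega) hmem)
    (by
      intro v hv w hRw
      rcases HT v hv w hRw with h | h
      · exact Or.inl h
      · right
        rw [h]
        show fp x = fp (x-0)
        rw [show x - 0 = x by omega])
    (by
      intro b hb1 hb2
      exact HP b hb1 hb2)
    f 0 {w0} w0 1 (by omega)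
    (by
      intro y hy
      rw [Finset.mem_singleton] at hy
      rw [hy]
      exact hw0)
    (Finset.mem_singleton_self _) le_rfl (by simp)
    (by
      intro w hRw
      have hRw' : R (fp 0) w := by
        have he2 : x - x = 0 := by omega
        rw [← he2]
        exact hRw
      obtain ⟨j, hjn, hjadj, rfl⟩ := HfNbr 0 (by omega) w hRw'
      have hje : j = 1 := by omega
      left
      refine ⟨x-1, by omega, ?_⟩
      show fp j = fp (x-(x-1))
      rw [hje, show x-(x-1) = 1 by omega])
    (by
      rw [Finset.card_singleton]
      omega)
  exact hres

lemma bob_strategy {V : Type} [DecidableEq V] (R : V → V → Prop) (P : ℕ → ℕ → Prop)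
    (n : ℕ) (fp gp : ℕ → V)
    (Hfinj : ∀ i, i < n → ∀ j, j < n → fp i = fp j → i = j)
    (Hginj : ∀ i, i < n → ∀ j, j < n → gp i = gp j → i = j)
    (Hfg : ∀ i j, fp i ≠ gp j)
    (Hfadj : ∀ i j, i < n → j < n → (j = i+1 ∨ j+1 = i) → R (fp i) (fp j))
    (Hgadj : ∀ k, k + 1 < n → R (gp k) (gp (k+1)))
    (HfNbr : ∀ i, i < n → ∀ w, R (fp i) w → ∃ j, j < n ∧ (j = i+1 ∨ j+1 = i) ∧ w = fp j)
    (HgNbr : ∀ i, i < n → ∀ w, R (gp i) w → ∃ j, j < n ∧ (j = i+1 ∨ j+1 = i) ∧ w = gp j)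
    (r : ℝ) (hr1 : 1 < r) (hr2 : r < 2)
    (HP : ∀ A B : ℕ, 1 ≤ A → r * (A:ℝ) ≤ (B:ℝ) → P A B)
    (hC1 : r * (1+r) ≤ (n:ℝ) * (1 + r - r^2))
    (hn5 : 5 ≤ n) (a : ℕ) (ha : a < n) (f : ℕ) (hf : 4*n - 2 ≤ f) :
    ∃ w, w ≠ fp a ∧ tronForceB R P f true ⟨fp a, w, {fp a, w}, 1, 1⟩ := by
  have hr0 : (0:ℝ) < r := by linarith
  have ha' : (a:ℝ) < n := by exact_mod_cast ha
  by_cases h1 : 2*a + 1 ≤ n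
  · have h1' : 2*(a:ℝ) + 1 ≤ n := by exact_mod_cast h1
    by_cases h2 : r * ((n:ℝ) - a) ≤ n
    · refine ⟨gp 0, (Hfg a 0).symm, ?_⟩
      refine bob_other R P n fp gp Hfinj Hginj Hfg Hfadj Hgadj HfNbr HgNbr a ha ?_ ?_ f (by omega)
      · refine HP (a+1) n (by omega) ?_
        push_cast
        nlinarith
      · refine HP (n-a) n (by omega) ?_
        rw [Nat.cast_sub (by omega)]
        exact h2
    · push_neg at h2
      have ha2 : a + 2 ≤ n := by
        by_contra h
        have he : a + 1 = n := by omega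
        have he' : (a:ℝ) + 1 = n := by exact_mod_cast he
        have : ((n:ℝ) - a) = 1 := by linarith
        rw [this, mul_one] at h2
        have : (5:ℝ) ≤ n := by exact_mod_cast hn5
        linarith
      refine ⟨fp (a+1), fun h => by have := Hfinj (a+1) (by omega) a (by omega) h; omega, ?_⟩
      refine bob_block_up R P n fp Hfinj Hfadj HfNbr a (by omega) ?_ f (by omega)
      intro x hx1 hx2
      refine HP x (n-1-a) hx1 ?_
      have hcast : ((n-1-a:ℕ):ℝ) = (n:ℝ) - 1 - (a:ℝ) := by
        rw [show n-1-a = n-(1+a) by omega, Nat.cast_sub (by omega : 1+a ≤ n)]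
        push_cast
        ring
      rw [hcast]
      have hx2' : (x:ℝ) ≤ (a:ℝ) + 1 := by exact_mod_cast hx2
      have key : (a:ℝ)*(r+1)*r < (n:ℝ)*(r^2-1) := by nlinarith
      nlinarith
  · push_neg at h1
    have h1' : (n:ℝ) < 2*(a:ℝ) + 1 := by exact_mod_cast h1
    by_cases h2 : r * ((a:ℝ) + 1) ≤ n
    · refine ⟨gp 0, (Hfg a 0).symm, ?_⟩
      refine bob_other R P n fp gp Hfinj Hginj Hfg Hfadj Hgadj HfNbr HgNbr a ha ?_ ?_ f (by omega)
      · refine HP (a+1) n (by omega) ?_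
        push_cast
        exact_mod_cast h2
      · refine HP (n-a) n (by omega) ?_
        rw [Nat.cast_sub (by omega)]
        nlinarith
    · push_neg at h2
      have ha1 : 2 ≤ a := by omega
      refine ⟨fp (a-1), fun h => by have := Hfinj (a-1) (by omega) a (by omega) h; omega, ?_⟩
      refine bob_block_down R P n fp Hfinj Hfadj HfNbr a (by omega) ha ?_ f (by omega)
      intro x hx1 hx2
      refine HP x a hx1 ?_
      have hx2' : (x:ℝ) ≤ (n:ℝ) - (a:ℝ) := by
        have := Nat.cast_le (α := ℝ) |>.mpr hx2
        rw [Nat.cast_sub (by omega)] at this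
        exact this
      have key : (a:ℝ)*r*(1+r) > ((n:ℝ) - r)*(1+r) := by nlinarith
      nlinarith

lemma alice_strategy {V : Type} [DecidableEq V] (R : V → V → Prop) (P : ℕ → ℕ → Prop)
    (n : ℕ) (fp gp : ℕ → V)
    (Hfinj : ∀ i, i < n → ∀ j, j < n → fp i = fp j → i = j)
    (Hginj : ∀ i, i < n → ∀ j, j < n → gp i = gp j → i = j)
    (Hfg : ∀ i j, fp i ≠ gp j)
    (Hfadj : ∀ i j, i < n → j < n → (j = i+1 ∨ j+1 = i) → R (fp i) (fp j))
    (HfNbr : ∀ i, i < n → ∀ w, R (fp i) w → ∃ j, j < n ∧ (j = i+1 ∨ j+1 = i) ∧ w = fp j)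
    (HgNbr : ∀ i, i < n → ∀ w, R (gp i) w → ∃ j, j < n ∧ (j = i+1 ∨ j+1 = i) ∧ w = gp j)
    (Hsurj : ∀ v : V, (∃ i, i < n ∧ v = fp i) ∨ (∃ i, i < n ∧ v = gp i))
    (x : ℕ) (hx1 : 1 ≤ x) (hx : x + 2 ≤ n)
    (HPa : ∀ B, 1 ≤ B → B ≤ n → P (n-x) B)
    (HPb : ∀ B, 1 ≤ B → B ≤ n-1-x → P (x+1) B)
    (HPc : ∀ B, 1 ≤ B → B ≤ x → P (n-x) B)
    (f : ℕ) (hf : 4*n - 2 ≤ f) :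
    ∀ w, w ≠ fp x → tronForceA R P f true ⟨fp x, w, {fp x, w}, 1, 1⟩ := by
  classical
  intro w hw
  rcases Hsurj w with ⟨y, hy, rfl⟩ | ⟨b, hb, rfl⟩
  · -- Bob starts on Alice's path
    have hyx : y ≠ x := fun h => hw (by rw [h])
    by_cases hlt : y < x
    · -- Bob below: Alice runs up
      have hTcard : ((Finset.range x).image fp).card = x := by
        rw [Finset.card_image_of_injOn, Finset.card_range]
        intro i hi j hj h
        simp only [Finset.mem_coe, Finset.mem_range] at hi hj
        exact Hfinj i (by omega) j (by omega) h
      refine alice_ray_up R P n fp Hfinj Hfadj HfNbr x hx ((Finset.range x).image fp)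
        (fp y) (Finset.mem_image_of_mem _ (Finset.mem_range.mpr hlt)) ?_ ?_ ?_ f ?_
      · intro j hj1 hj2 hmem
        obtain ⟨i, hi, hie⟩ := Finset.mem_image.mp hmem
        rw [Finset.mem_range] at hi
        have := Hfinj i (by omega) j (by omega) hie
        omega
      · intro v hv w' hRw'
        obtain ⟨i, hi, rfl⟩ := Finset.mem_image.mp hv
        rw [Finset.mem_range] at hi
        obtain ⟨j, hjn, hjadj, rfl⟩ := HfNbr i (by omega) w' hRw'
        by_cases hjx : j < x
        · exact Or.inl (Finset.mem_image_of_mem _ (Finset.mem_range.mpr hjx))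
        · right
          have : j = x := by omega
          rw [this]
      · intro b hb1 hb2
        rw [hTcard] at hb2
        exact HPc b hb1 hb2
      · rw [hTcard]
        omega
    · -- Bob above: Alice runs down
      have hgt : x < y := by omega
      have hTcard : ((Finset.Ico (x+1) n).image fp).card = n - (x+1) := by
        rw [Finset.card_image_of_injOn, Nat.card_Ico]
        intro i hi j hj h
        simp only [Finset.mem_coe, Finset.mem_Ico] at hi hj
        exact Hfinj i (by omega) j (by omega) h
      refine alice_ray_down R P n fp Hfinj Hfadj HfNbr x hx1 (by omega)
        ((Finset.Ico (x+1) n).image fp)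
        (fp y) (Finset.mem_image_of_mem _ (Finset.mem_Ico.mpr ⟨by omega, hy⟩)) ?_ ?_ ?_ f ?_
      · intro j hj1 hmem
        obtain ⟨i, hi, hie⟩ := Finset.mem_image.mp hmem
        rw [Finset.mem_Ico] at hi
        have := Hfinj i (by omega) j (by omega) hie
        omega
      · intro v hv w' hRw'
        obtain ⟨i, hi, rfl⟩ := Finset.mem_image.mp hv
        rw [Finset.mem_Ico] at hi
        obtain ⟨j, hjn, hjadj, rfl⟩ := HfNbr i (by omega) w' hRw'
        by_cases hjx : x + 1 ≤ j
        · exact Or.inl (Finset.mem_image_of_mem _ (Finset.mem_Ico.mpr ⟨hjx, hjn⟩))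
        · right
          have : j = x := by omega
          rw [this]
      · intro b hb1 hb2
        rw [hTcard] at hb2
        exact HPb b hb1 (by omega)
      · rw [hTcard]
        omega
  · -- Bob starts on the other path
    have hTcard : ((Finset.range n).image gp).card = n := by
      rw [Finset.card_image_of_injOn, Finset.card_range]
      intro i hi j hj h
      simp only [Finset.mem_coe, Finset.mem_range] at hi hj
      exact Hginj i (by omega) j (by omega) h
    refine alice_ray_up R P n fp Hfinj Hfadj HfNbr x hx ((Finset.range n).image gp)
      (gp b) (Finset.mem_image_of_mem _ (Finset.mem_range.mpr hb)) ?_ ?_ ?_ f ?_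
    · intro j hj1 hj2 hmem
      obtain ⟨i, hi, hie⟩ := Finset.mem_image.mp hmem
      exact Hfg j i hie.symm
    · intro v hv w' hRw'
      obtain ⟨i, hi, rfl⟩ := Finset.mem_image.mp hv
      rw [Finset.mem_range] at hi
      obtain ⟨j, hjn, hjadj, rfl⟩ := HgNbr i (by omega) w' hRw'
      exact Or.inl (Finset.mem_image_of_mem _ (Finset.mem_range.mpr hjn))
    · intro b' hb1 hb2
      rw [hTcard] at hb2
      exact HPa b' hb1 hb2
    · rw [hTcard]
      omega

lemma twoPaths_emb (n : ℕ) (hn : 0 < n) :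
    ∃ fp gp : ℕ → (Fin n ⊕ Fin n),
      (∀ i, i < n → ∀ j, j < n → fp i = fp j → i = j) ∧
      (∀ i, i < n → ∀ j, j < n → gp i = gp j → i = j) ∧
      (∀ i j, fp i ≠ gp j) ∧
      (∀ i j, i < n → j < n → (j = i+1 ∨ j+1 = i) → (twoPaths n).Adj (fp i) (fp j)) ∧
      (∀ i j, i < n → j < n → (j = i+1 ∨ j+1 = i) → (twoPaths n).Adj (gp i) (gp j)) ∧
      (∀ i, i < n → ∀ w, (twoPaths n).Adj (fp i) w →
        ∃ j, j < n ∧ (j = i+1 ∨ j+1 = i) ∧ w = fp j) ∧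
      (∀ i, i < n → ∀ w, (twoPaths n).Adj (gp i) w →
        ∃ j, j < n ∧ (j = i+1 ∨ j+1 = i) ∧ w = gp j) ∧
      (∀ v : Fin n ⊕ Fin n, (∃ i, i < n ∧ v = fp i) ∨ (∃ i, i < n ∧ v = gp i)) ∧
      (∀ a : Fin n, fp a.val = Sum.inl a) ∧ (∀ a : Fin n, gp a.val = Sum.inr a) := by
  refine ⟨fun i => Sum.inl ⟨min i (n-1), by omega⟩, fun i => Sum.inr ⟨min i (n-1), by omega⟩,
    ?_, ?_, ?_, ?_, ?_, ?_, ?_, ?_, ?_, ?_⟩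
  · intro i hi j hj h
    simp only [Sum.inl.injEq, Fin.mk.injEq] at h
    omega
  · intro i hi j hj h
    simp only [Sum.inr.injEq, Fin.mk.injEq] at h
    omega
  · intro i j
    simp
  · intro i j hi hj hadj
    show (twoPaths n).Adj (Sum.inl ⟨min i (n-1), by omega⟩) (Sum.inl ⟨min j (n-1), by omega⟩)
    rw [twoPaths_adj_inl_inl]
    simp only
    omega
  · intro i j hi hj hadj
    show (twoPaths n).Adj (Sum.inr ⟨min i (n-1), by omega⟩) (Sum.inr ⟨min j (n-1), by omega⟩)
    rw [twoPaths_adj_inr_inr]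
    simp only
    omega
  · intro i hi w hAdj
    have hAdj' : (twoPaths n).Adj (Sum.inl ⟨min i (n-1), by omega⟩) w := hAdj
    clear hAdj
    rcases w with b | b
    · rw [twoPaths_adj_inl_inl] at hAdj'
      simp only at hAdj'
      rename' hAdj' => hAdj
      refine ⟨b.val, b.isLt, by omega, ?_⟩
      simp only [Sum.inl.injEq]
      exact Fin.ext (by simp; omega)
    · exact absurd hAdj' (twoPaths_adj_inl_inr n _ b)
  · intro i hi w hAdj
    have hAdj' : (twoPaths n).Adj (Sum.inr ⟨min i (n-1), by omega⟩) w := hAdj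
    clear hAdj
    rcases w with b | b
    · exact absurd hAdj' (twoPaths_adj_inr_inl n _ b)
    · rw [twoPaths_adj_inr_inr] at hAdj'
      simp only at hAdj'
      rename' hAdj' => hAdj
      refine ⟨b.val, b.isLt, by omega, ?_⟩
      simp only [Sum.inr.injEq]
      exact Fin.ext (by simp; omega)
  · intro v
    rcases v with a | a
    · left
      refine ⟨a.val, a.isLt, ?_⟩
      simp only [Sum.inl.injEq]
      exact Fin.ext (by simp; omega)
    · right
      refine ⟨a.val, a.isLt, ?_⟩
      simp only [Sum.inr.injEq]
      exact Fin.ext (by simp; omega)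
  · intro a
    simp only [Sum.inl.injEq]
    exact Fin.ext (by simp; omega)
  · intro a
    simp only [Sum.inr.injEq]
    exact Fin.ext (by simp; omega)

lemma exists_nat_bound (c d : ℝ) (hc : 0 < c) : ∃ N : ℕ, ∀ n : ℕ, N ≤ n → d ≤ c * n := by
  refine ⟨⌈d / c⌉₊, fun n hn => ?_⟩
  have h1 : d / c ≤ (⌈d / c⌉₊ : ℝ) := Nat.le_ceil _
  have h2 : ((⌈d / c⌉₊ : ℕ):ℝ) ≤ (n:ℝ) := by exact_mod_cast hn
  rw [div_le_iff₀ hc] at h1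
  nlinarith

set_option maxHeartbeats 2000000 in
theorem tron_two_paths_ratio_tendsto_golden' :
    ∀ ε : ℝ, 0 < ε → ∃ N : ℕ, ∀ n, N ≤ n →
      bobCanForce (twoPaths n)
        (fun a b => 2 / (Real.sqrt 5 - 1) - ε ≤ (b : ℝ) / (a : ℝ)) ∧
      aliceCanForce (twoPaths n)
        (fun a b => (b : ℝ) / (a : ℝ) ≤ 2 / (Real.sqrt 5 - 1) + ε) := by
  intro ε hε
  have hs : Real.sqrt 5 * Real.sqrt 5 = 5 := Real.mul_self_sqrt (by norm_num)
  have hsnn : 0 ≤ Real.sqrt 5 := Real.sqrt_nonneg 5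
  have h2s : 2 < Real.sqrt 5 := by nlinarith
  have h3s : Real.sqrt 5 < 3 := by nlinarith
  set g : ℝ := 2 / (Real.sqrt 5 - 1) with hgdef
  have hg : g = (Real.sqrt 5 + 1)/2 := by
    rw [hgdef, div_eq_div_iff (by linarith) (by norm_num)]
    nlinarith
  have hg1 : 1 < g := by rw [hg]; linarith
  have hg2 : g < 2 := by rw [hg]; linarith
  have hgg : g * (g - 1) = 1 := by
    rw [hg]
    nlinarith
  set ε' := min ε ((g-1)/2) with hε'def
  have hε'pos : 0 < ε' := lt_min hε (by linarith)
  have hε'le : ε' ≤ ε := min_le_left _ _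
  have hε'le2 : ε' ≤ (g-1)/2 := min_le_right _ _
  set r := g - ε' with hrdef
  have hr1 : 1 < r := by rw [hrdef]; linarith
  have hr2 : r < 2 := by rw [hrdef]; linarith
  have hrg : g - ε ≤ r := by rw [hrdef]; linarith
  have hrltg : r < g := by rw [hrdef]; linarith
  have hposc : 0 < 1 + r - r^2 := by nlinarith
  obtain ⟨N1, hN1⟩ := exists_nat_bound (1+r-r^2) (r*(1+r)) hposc
  obtain ⟨N2, hN2⟩ := exists_nat_bound (ε*(g-1)) (g+ε) (mul_pos hε (by linarith))
  obtain ⟨N3, hN3⟩ := exists_nat_bound (g-1) 3 (by linarith)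
  obtain ⟨N4, hN4⟩ := exists_nat_bound (2-g) 1 (by linarith)
  refine ⟨max (max N1 N2) (max (max N3 N4) 5), fun n hn => ?_⟩
  simp only [max_le_iff] at hn
  obtain ⟨⟨hn1, hn2⟩, ⟨hn3, hn4⟩, hn5⟩ := hn
  have hC1 : r*(1+r) ≤ (n:ℝ)*(1+r-r^2) := by linarith [hN1 n hn1]
  have hCA1 := hN2 n hn2
  have hCA3 := hN3 n hn3
  have hCA5 := hN4 n hn4
  have hn0 : 0 < n := by omega
  obtain ⟨fp, gp, Hfinj, Hginj, Hfg, Hfadj, Hgadj, HfNbr, HgNbr, Hsurj, hfl, hgl⟩ :=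
    twoPaths_emb n hn0
  have hfuel : 4*n - 2 ≤ tronFuel (Fin n ⊕ Fin n) := by
    simp [tronFuel]
    omega
  constructor
  · -- Bob can force
    intro v
    have HP : ∀ A B : ℕ, 1 ≤ A → r * (A:ℝ) ≤ (B:ℝ) →
        g - ε ≤ (B:ℝ) / (A:ℝ) := by
      intro A B hA h
      have hA' : (0:ℝ) < A := by exact_mod_cast hA
      rw [le_div_iff₀ hA']
      nlinarith
    rcases Hsurj v with ⟨a, ha, rfl⟩ | ⟨a, ha, rfl⟩
    · obtain ⟨w, hw, hforce⟩ := bob_strategy (twoPaths n).Adj _ n fp gp Hfinj Hginj Hfg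
        Hfadj (fun k hk => Hgadj k (k+1) (by omega) (by omega) (Or.inl rfl)) HfNbr HgNbr
        r hr1 hr2 HP hC1 hn5 a ha (tronFuel (Fin n ⊕ Fin n)) (by omega)
      exact ⟨w, hw, hforce⟩
    · obtain ⟨w, hw, hforce⟩ := bob_strategy (twoPaths n).Adj _ n gp fp Hginj Hfinj
        (fun i j => (Hfg j i).symm)
        Hgadj (fun k hk => Hfadj k (k+1) (by omega) (by omega) (Or.inl rfl)) HgNbr HfNbr
        r hr1 hr2 HP hC1 hn5 a ha (tronFuel (Fin n ⊕ Fin n)) (by omega)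
      exact ⟨w, hw, hforce⟩
  · -- Alice can force
    set x := ⌈(2-g)*n⌉₊ with hxdef
    have hxle : (2-g)*n ≤ (x:ℝ) := Nat.le_ceil _
    have hxlt : (x:ℝ) < (2-g)*n + 1 :=
      Nat.ceil_lt_add_one (mul_nonneg (by linarith) (Nat.cast_nonneg n))
    have hx1 : 1 ≤ x := by
      have h1 : (1:ℝ) ≤ (x:ℝ) := le_trans hCA5 hxle
      exact_mod_cast h1
    have hx2n : x + 2 ≤ n := by
      have h1 : (x:ℝ) + 2 ≤ (n:ℝ) := by linarith [hxlt, hCA3]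
      exact_mod_cast h1
    have hnx : (0:ℝ) < (n:ℝ) - (x:ℝ) := by
      have : (x:ℝ) + 2 ≤ (n:ℝ) := by exact_mod_cast hx2n
      linarith
    have hcastnx : ((n - x:ℕ):ℝ) = (n:ℝ) - (x:ℝ) := by
      rw [Nat.cast_sub (by omega)]
    have key : (g-1)*(n:ℝ) - 1 ≤ (n:ℝ) - (x:ℝ) := by linarith [hxlt]
    refine ⟨fp x, fun w hw => ?_⟩
    refine alice_strategy (twoPaths n).Adj _ n fp gp Hfinj Hginj Hfg Hfadj HfNbr HgNbr
      Hsurj x hx1 hx2n ?_ ?_ ?_ (tronFuel (Fin n ⊕ Fin n)) (by omega) w hw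
    · -- Bob on other path: Alice gets n - x, Bob at most n
      intro B hB1 hB2
      have hB2' : (B:ℝ) ≤ (n:ℝ) := by exact_mod_cast hB2
      rw [hcastnx, div_le_iff₀ hnx]
      have k1 : g*((g-1)*(n:ℝ)) = (n:ℝ) := by linear_combination (n:ℝ)*hgg
      have hp : (0:ℝ) ≤ (g+ε)*((n:ℝ) - (x:ℝ) - ((g-1)*(n:ℝ) - 1)) :=
        mul_nonneg (by linarith) (by linarith [key])
      nlinarith [hp, k1, hCA1]
    · -- Bob above on same path: Alice gets x+1, Bob at most n-1-x
      intro B hB1 hB2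
      have hB2' : (B:ℝ) ≤ (n:ℝ) - 1 - (x:ℝ) := by
        have h1 : ((n-1-x:ℕ):ℝ) = (n:ℝ) - 1 - (x:ℝ) := by
          rw [show n-1-x = n - (1+x) by omega, Nat.cast_sub (by omega)]
          push_cast
          ring
        have h2 : (B:ℝ) ≤ ((n-1-x:ℕ):ℝ) := by exact_mod_cast hB2
        rw [h1] at h2
        exact h2
      have hxpos : (0:ℝ) < (x:ℝ) + 1 := by positivity
      have hc : ((x+1:ℕ):ℝ) = (x:ℝ) + 1 := by push_cast; ring
      rw [hc, div_le_iff₀ hxpos]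
      have k3 : g*((2-g)*(n:ℝ)) = (g-1)*(n:ℝ) := by linear_combination (-(n:ℝ))*hgg
      have hp : (0:ℝ) ≤ g*((x:ℝ) - (2-g)*(n:ℝ)) :=
        mul_nonneg (by linarith) (by linarith [hxle])
      have hp2 : (0:ℝ) ≤ ε*((x:ℝ)+1) := mul_nonneg (le_of_lt hε) (by positivity)
      nlinarith [hp, hp2, k3, hxle]
    · -- Bob below on same path: Alice gets n - x, Bob at most x
      intro B hB1 hB2
      have hB2' : (B:ℝ) ≤ (x:ℝ) := by exact_mod_cast hB2
      rw [hcastnx, div_le_iff₀ hnx]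
      have k1 : g*((g-1)*(n:ℝ)) = (n:ℝ) := by linear_combination (n:ℝ)*hgg
      have hp : (0:ℝ) ≤ (g+ε)*((n:ℝ) - (x:ℝ) - ((g-1)*(n:ℝ) - 1)) :=
        mul_nonneg (by linarith) (by linarith [key])
      nlinarith [hp, k1, hCA1, hCA3, hxlt, hg2]

/-- On the disjoint union of two paths `P_n`, the optimal
ratio Bob/Alice tends to `2 / (√5 - 1)` as `n → ∞`: for every `ε > 0` and all
large `n`, Bob can force the ratio to be at least `2/(√5-1) - ε` and Alice can
force it to be at most `2/(√5-1) + ε`. -/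
theorem tron_two_paths_ratio_tendsto_golden :
    ∀ ε : ℝ, 0 < ε → ∃ N : ℕ, ∀ n, N ≤ n →
      bobCanForce (twoPaths n)
        (fun a b => 2 / (Real.sqrt 5 - 1) - ε ≤ (b : ℝ) / (a : ℝ)) ∧
      aliceCanForce (twoPaths n)
        (fun a b => (b : ℝ) / (a : ℝ) ≤ 2 / (Real.sqrt 5 - 1) + ε) := by
  exact tron_two_paths_ratio_tendsto_golden'
end

section
/- Let G be a graph on which, under optimal Tron play, Bob's score strictly exceeds Alice's score. Let F be the graph obtained from G by adding a new vertex v adjacent to every vertex of G. Then in the Tron game on F, the optimal ratio (Alice's score)/(Bob's score) on F is at least the optimal ratio (Bob's score)/(Alice's score) on G. -/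
/-- `G` together with a new universal vertex (`none`) adjacent to everything. -/
def addUniversal {V : Type} (G : SimpleGraph V) : SimpleGraph (Option V) :=
  SimpleGraph.fromRel (fun x y =>
    match x, y with
    | none, some _ => True
    | some a, some b => G.Adj a b
    | _, _ => False)
namespace TronAux

variable {V : Type} [DecidableEq V]

open Classical in
lemma forceB_zero (R : V → V → Prop) (P : ℕ → ℕ → Prop) (t : Bool) (s : TronState V) :
    tronForceB R P 0 t s ↔ P s.scoreA s.scoreB := by
  cases t <;> rw [tronForceB]

open Classical in
lemma forceB_true (R : V → V → Prop) (P : ℕ → ℕ → Prop) (f : ℕ) (s : TronState V) :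
    tronForceB R P (f+1) true s ↔ (if TronStuck R s.posA s.visited then
        if TronStuck R s.posB s.visited then P s.scoreA s.scoreB
        else tronForceB R P f false s
      else
        ∀ w, R s.posA w → w ∉ s.visited →
          tronForceB R P f false ⟨w, s.posB, insert w s.visited, s.scoreA + 1, s.scoreB⟩) := by
  rw [tronForceB]

open Classical in
lemma forceB_false (R : V → V → Prop) (P : ℕ → ℕ → Prop) (f : ℕ) (s : TronState V) :
    tronForceB R P (f+1) false s ↔ (if TronStuck R s.posB s.visited then
        if TronStuck R s.posA s.visited then P s.scoreA s.scoreB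
        else tronForceB R P f true s
      else
        ∃ w, R s.posB w ∧ w ∉ s.visited ∧
          tronForceB R P f true ⟨s.posA, w, insert w s.visited, s.scoreA, s.scoreB + 1⟩) := by
  rw [tronForceB]

open Classical in
lemma forceA_zero (R : V → V → Prop) (P : ℕ → ℕ → Prop) (t : Bool) (s : TronState V) :
    tronForceA R P 0 t s ↔ P s.scoreA s.scoreB := by
  cases t <;> rw [tronForceA]

open Classical in
lemma forceA_true (R : V → V → Prop) (P : ℕ → ℕ → Prop) (f : ℕ) (s : TronState V) :
    tronForceA R P (f+1) true s ↔ (if TronStuck R s.posA s.visited then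
        if TronStuck R s.posB s.visited then P s.scoreA s.scoreB
        else tronForceA R P f false s
      else
        ∃ w, R s.posA w ∧ w ∉ s.visited ∧
          tronForceA R P f false ⟨w, s.posB, insert w s.visited, s.scoreA + 1, s.scoreB⟩) := by
  rw [tronForceA]

open Classical in
lemma forceA_false (R : V → V → Prop) (P : ℕ → ℕ → Prop) (f : ℕ) (s : TronState V) :
    tronForceA R P (f+1) false s ↔ (if TronStuck R s.posB s.visited then
        if TronStuck R s.posA s.visited then P s.scoreA s.scoreB
        else tronForceA R P f true s
      else
        ∀ w, R s.posB w → w ∉ s.visited →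
          tronForceA R P f true ⟨s.posA, w, insert w s.visited, s.scoreA, s.scoreB + 1⟩) := by
  rw [tronForceA]

lemma card_sdiff_insert [Fintype V] (vis : Finset V) (w : V) (hw : w ∉ vis) :
    (Finset.univ \ insert w vis).card + 1 = (Finset.univ \ vis).card := by
  have h1 : Finset.univ \ insert w vis = (Finset.univ \ vis).erase w := by
    ext x; simp [Finset.mem_sdiff, Finset.mem_erase, and_comm]
  rw [h1, Finset.card_erase_add_one]
  simp [hw]

/-- Fuel irrelevance once there is enough fuel. -/
lemma forceB_fuel_succ [Fintype V] (R : V → V → Prop) (P : ℕ → ℕ → Prop) (f : ℕ) :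
    ∀ (t : Bool) (s : TronState V), 2 * (Finset.univ \ s.visited).card + 2 ≤ f →
      (tronForceB R P f t s ↔ tronForceB R P (f+1) t s) := by
  induction f using Nat.strong_induction_on with
  | _ f ih =>
  intro t s hf
  set k := (Finset.univ \ s.visited).card with hk
  obtain ⟨g, rfl⟩ : ∃ g, f = g + 1 := ⟨f - 1, by omega⟩
  have hkmove : ∀ p : V, ¬ TronStuck R p s.visited → 1 ≤ k := by
    intro p hstuck
    simp only [TronStuck, not_forall] at hstuck
    obtain ⟨w, hw, hwv⟩ := hstuck
    have hmem : w ∈ Finset.univ \ s.visited := by simp [hwv]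
    have := Finset.card_pos.mpr ⟨w, hmem⟩
    omega
  cases t with
  | true =>
    rw [forceB_true, forceB_true]
    by_cases hA : TronStuck R s.posA s.visited
    · rw [if_pos hA, if_pos hA]
      by_cases hB : TronStuck R s.posB s.visited
      · rw [if_pos hB, if_pos hB]
      · rw [if_neg hB, if_neg hB]
        have hk1 := hkmove _ hB
        obtain ⟨h, rfl⟩ : ∃ h, g = h + 1 := ⟨g - 1, by omega⟩
        rw [forceB_false, forceB_false, if_neg hB, if_neg hB]
        refine exists_congr fun w => and_congr_right fun hw => and_congr_right fun hwv => ?_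
        refine ih h (by omega) _ _ ?_
        have := card_sdiff_insert s.visited w hwv
        simp only []
        omega
    · rw [if_neg hA, if_neg hA]
      refine forall_congr' fun w => imp_congr_right fun hw => imp_congr_right fun hwv => ?_
      refine ih g (by omega) _ _ ?_
      have := card_sdiff_insert s.visited w hwv
      simp only []
      omega
  | false =>
    rw [forceB_false, forceB_false]
    by_cases hB : TronStuck R s.posB s.visited
    · rw [if_pos hB, if_pos hB]
      by_cases hA : TronStuck R s.posA s.visited
      · rw [if_pos hA, if_pos hA]
      · rw [if_neg hA, if_neg hA]
        have hk1 := hkmove _ hA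
        obtain ⟨h, rfl⟩ : ∃ h, g = h + 1 := ⟨g - 1, by omega⟩
        rw [forceB_true, forceB_true, if_neg hA, if_neg hA]
        refine forall_congr' fun w => imp_congr_right fun hw => imp_congr_right fun hwv => ?_
        refine ih h (by omega) _ _ ?_
        have := card_sdiff_insert s.visited w hwv
        simp only []
        omega
    · rw [if_neg hB, if_neg hB]
      refine exists_congr fun w => and_congr_right fun hw => and_congr_right fun hwv => ?_
      refine ih g (by omega) _ _ ?_
      have := card_sdiff_insert s.visited w hwv
      simp only []
      omega

open Classical in
lemma forceB_true' (R : V → V → Prop) (P : ℕ → ℕ → Prop) (f : ℕ)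
    (pa pb : V) (vis : Finset V) (a b : ℕ) :
    tronForceB R P (f+1) true ⟨pa, pb, vis, a, b⟩ ↔
      (if TronStuck R pa vis then
        if TronStuck R pb vis then P a b
        else tronForceB R P f false ⟨pa, pb, vis, a, b⟩
      else
        ∀ w, R pa w → w ∉ vis →
          tronForceB R P f false ⟨w, pb, insert w vis, a + 1, b⟩) :=
  forceB_true R P f ⟨pa, pb, vis, a, b⟩

open Classical in
lemma forceB_false' (R : V → V → Prop) (P : ℕ → ℕ → Prop) (f : ℕ)
    (pa pb : V) (vis : Finset V) (a b : ℕ) :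
    tronForceB R P (f+1) false ⟨pa, pb, vis, a, b⟩ ↔
      (if TronStuck R pb vis then
        if TronStuck R pa vis then P a b
        else tronForceB R P f true ⟨pa, pb, vis, a, b⟩
      else
        ∃ w, R pb w ∧ w ∉ vis ∧
          tronForceB R P f true ⟨pa, w, insert w vis, a, b + 1⟩) :=
  forceB_false R P f ⟨pa, pb, vis, a, b⟩

open Classical in
lemma forceA_true' (R : V → V → Prop) (P : ℕ → ℕ → Prop) (f : ℕ)
    (pa pb : V) (vis : Finset V) (a b : ℕ) :
    tronForceA R P (f+1) true ⟨pa, pb, vis, a, b⟩ ↔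
      (if TronStuck R pa vis then
        if TronStuck R pb vis then P a b
        else tronForceA R P f false ⟨pa, pb, vis, a, b⟩
      else
        ∃ w, R pa w ∧ w ∉ vis ∧
          tronForceA R P f false ⟨w, pb, insert w vis, a + 1, b⟩) :=
  forceA_true R P f ⟨pa, pb, vis, a, b⟩

open Classical in
lemma forceA_false' (R : V → V → Prop) (P : ℕ → ℕ → Prop) (f : ℕ)
    (pa pb : V) (vis : Finset V) (a b : ℕ) :
    tronForceA R P (f+1) false ⟨pa, pb, vis, a, b⟩ ↔
      (if TronStuck R pb vis then
        if TronStuck R pa vis then P a b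
        else tronForceA R P f true ⟨pa, pb, vis, a, b⟩
      else
        ∀ w, R pb w → w ∉ vis →
          tronForceA R P f true ⟨pa, w, insert w vis, a, b + 1⟩) :=
  forceA_false R P f ⟨pa, pb, vis, a, b⟩

lemma addUniversal_adj_some_some (G : SimpleGraph V) (x y : V) :
    (addUniversal G).Adj (some x) (some y) ↔ G.Adj x y := by
  show (some x ≠ some y ∧ (G.Adj x y ∨ G.Adj y x)) ↔ _
  constructor
  · rintro ⟨h, h1 | h1⟩
    · exact h1
    · exact h1.symm
  · intro h
    exact ⟨by simpa using G.ne_of_adj h, Or.inl h⟩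

lemma addUniversal_adj_none (G : SimpleGraph V) (y : V) :
    (addUniversal G).Adj none (some y) := by
  show (none : Option V) ≠ some y ∧ (True ∨ False)
  simp

lemma stuck_corr (G : SimpleGraph V) (x : V) (vis : Finset V) :
    TronStuck (addUniversal G).Adj (some x) (insert none (vis.image some)) ↔
      TronStuck G.Adj x vis := by
  constructor
  · intro h y hy
    have := h (some y) ((addUniversal_adj_some_some G x y).mpr hy)
    simpa using this
  · intro h w hw
    match w with
    | none => simp
    | some y =>
      have := h y ((addUniversal_adj_some_some G x y).mp hw)
      simp [this]

lemma vis_insert (vis : Finset V) (y : V) :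
    insert (some y) (insert none (vis.image some)) =
      insert none ((insert y vis).image some) := by
  rw [Finset.image_insert]
  ext x; simp; tauto

/-- The simulation lemma: Alice on `addUniversal G` can mimic Bob's strategy
on `G` with the roles exchanged. -/
lemma sim (G : SimpleGraph V) (P P' : ℕ → ℕ → Prop)
    (hPP : ∀ a b : ℕ, P a b → P' (b+1) a) (f : ℕ) :
    ∀ (t : Bool) (pa pb : V) (vis : Finset V) (a b : ℕ),
      tronForceB G.Adj P f t ⟨pa, pb, vis, a, b⟩ →
      tronForceA (addUniversal G).Adj P' f (!t)
        ⟨some pb, some pa, insert none (vis.image some), b + 1, a⟩ := by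
  induction f with
  | zero =>
    intro t pa pb vis a b h
    rw [forceB_zero] at h
    rw [forceA_zero]
    exact hPP _ _ h
  | succ f ih =>
    intro t pa pb vis a b h
    cases t with
    | true =>
      rw [forceB_true'] at h
      simp only [Bool.not_true]
      rw [forceA_false']
      by_cases hA : TronStuck G.Adj pa vis
      · rw [if_pos ((stuck_corr G pa vis).mpr hA)]
        rw [if_pos hA] at h
        by_cases hB : TronStuck G.Adj pb vis
        · rw [if_pos ((stuck_corr G pb vis).mpr hB)]
          rw [if_pos hB] at h
          exact hPP _ _ h
        · rw [if_neg (fun hc => hB ((stuck_corr G pb vis).mp hc))]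
          rw [if_neg hB] at h
          have := ih false pa pb vis a b h
          simpa using this
      · rw [if_neg (fun hc => hA ((stuck_corr G pa vis).mp hc))]
        rw [if_neg hA] at h
        intro w hw hwv
        match w with
        | none => exact absurd (by simp) hwv
        | some y =>
          have hy : G.Adj pa y := (addUniversal_adj_some_some G pa y).mp hw
          have hyv : y ∉ vis := fun hc => hwv (by simp [hc])
          have := ih false y pb (insert y vis) (a+1) b (h y hy hyv)
          rw [vis_insert]
          simpa using this
    | false =>
      rw [forceB_false'] at h
      simp only [Bool.not_false]
      rw [forceA_true']
      by_cases hB : TronStuck G.Adj pb vis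
      · rw [if_pos ((stuck_corr G pb vis).mpr hB)]
        rw [if_pos hB] at h
        by_cases hA : TronStuck G.Adj pa vis
        · rw [if_pos ((stuck_corr G pa vis).mpr hA)]
          rw [if_pos hA] at h
          exact hPP _ _ h
        · rw [if_neg (fun hc => hA ((stuck_corr G pa vis).mp hc))]
          rw [if_neg hA] at h
          have := ih true pa pb vis a b h
          simpa using this
      · rw [if_neg (fun hc => hB ((stuck_corr G pb vis).mp hc))]
        rw [if_neg hB] at h
        obtain ⟨w, hw, hwv, hrec⟩ := h
        refine ⟨some w, (addUniversal_adj_some_some G pb w).mpr hw, by simp [hwv], ?_⟩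
        have := ih true pa w (insert w vis) a (b+1) hrec
        rw [vis_insert]
        simpa using this

end TronAux

open TronAux

/-- If on `G` Bob's optimal score strictly exceeds Alice's,
and `F` is `G` plus a universal vertex, then the optimal ratio Alice/Bob on `F`
is at least the optimal ratio Bob/Alice on `G`: any ratio `q` that Bob can
force on `G` can be forced (with roles exchanged) by Alice on `F`. -/
theorem tron_super_vertex
    {V : Type} [Fintype V] [DecidableEq V] (G : SimpleGraph V)
    (hwin : bobCanForce G (fun a b => a < b)) :
    ∀ q : ℝ, bobCanForce G (fun a b => q ≤ (b : ℝ) / (a : ℝ)) →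
      aliceCanForce (addUniversal G) (fun a b => q ≤ (a : ℝ) / (b : ℝ)) := by
  intro q hq
  refine ⟨none, ?_⟩
  intro w hw
  obtain ⟨u, rfl⟩ : ∃ u, w = some u := by
    cases w with
    | none => exact absurd rfl hw
    | some u => exact ⟨u, rfl⟩
  obtain ⟨w', hw'ne, hforce⟩ := hq u
  -- the predicate implication
  have hPP : ∀ a b : ℕ, q ≤ (b : ℝ) / (a : ℝ) → q ≤ ((b + 1 : ℕ) : ℝ) / (a : ℝ) := by
    intro a b h
    rcases Nat.eq_zero_or_pos a with rfl | ha
    · simpa using h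
    · refine h.trans ?_
      have ha' : (0 : ℝ) < (a : ℝ) := by exact_mod_cast ha
      exact (div_le_div_iff_of_pos_right ha').mpr (by push_cast; linarith)
  -- bump the fuel of Bob's strategy on G by one
  have hfuelcond : 2 * (Finset.univ \ ({u, w'} : Finset V)).card + 2 ≤ tronFuel V := by
    have h1 : (Finset.univ \ ({u, w'} : Finset V)).card ≤ Fintype.card V := by
      calc (Finset.univ \ ({u, w'} : Finset V)).card
          ≤ (Finset.univ : Finset V).card := Finset.card_le_card (Finset.sdiff_subset)
        _ = Fintype.card V := Finset.card_univ
    simp only [tronFuel]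
    omega
  have hforce' : tronForceB G.Adj (fun a b => q ≤ (b : ℝ) / (a : ℝ))
      (tronFuel V + 1) true ⟨u, w', {u, w'}, 1, 1⟩ :=
    (forceB_fuel_succ G.Adj _ (tronFuel V) true ⟨u, w', {u, w'}, 1, 1⟩ hfuelcond).mp hforce
  -- simulate it on the bigger graph
  have hsim := sim G (fun a b => q ≤ (b : ℝ) / (a : ℝ)) (fun a b => q ≤ (a : ℝ) / (b : ℝ)) hPP (tronFuel V + 1) true u w' {u, w'} 1 1 hforce'
  simp only [Bool.not_true] at hsim
  -- now unfold one step of the game on the bigger graph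
  have hfuel : tronFuel (Option V) = (tronFuel V + 1) + 1 := by
    simp [tronFuel, Fintype.card_option]
    ring
  show tronForceA (addUniversal G).Adj _ (tronFuel (Option V)) true
    ⟨none, some u, {none, some u}, 1, 1⟩
  rw [hfuel, forceA_true']
  have hnstuck : ¬ TronStuck (addUniversal G).Adj none ({none, some u} : Finset (Option V)) := by
    intro h
    have := h (some w') (addUniversal_adj_none G w')
    simp [hw'ne] at this
  rw [if_neg hnstuck]
  refine ⟨some w', addUniversal_adj_none G w', by simp [hw'ne], ?_⟩
  have hvis : insert (some w') ({none, some u} : Finset (Option V)) =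
      insert none (({u, w'} : Finset V).image some) := by
    ext x; simp; tauto
  rw [hvis]
  exact hsim
end

section
/- Let G be a graph on which, under optimal Tron play, Alice's score strictly exceeds Bob's score, and let v be an optimal starting vertex for Alice. Let H = G - v. Then the optimal Tron ratio satisfies (Bob's score + 1)/(Alice's score) on H is at least (Alice's score)/(Bob's score) on G. -/
section TronAux

set_option linter.unusedSectionVars false

variable {V : Type} [DecidableEq V]

private lemma tronStuck_insert {R : V → V → Prop} {p w : V} {vis : Finset V}
    (h : TronStuck R p vis) : TronStuck R p (insert w vis) :=
  fun u hu => Finset.mem_insert_of_mem (h u hu)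

private lemma not_tronStuck {R : V → V → Prop} {p : V} {vis : Finset V}
    (h : ¬ TronStuck R p vis) : ∃ w, R p w ∧ w ∉ vis := by
  simp only [TronStuck] at h; push_neg at h; exact h

/-- If Alice is stuck with score 1 and Bob has score at least 1, she cannot
force `b < a`. -/
private lemma tron_aliceStuck_not_win {R : V → V → Prop} :
    ∀ (f : ℕ) (t : Bool) (s : TronState V),
      TronStuck R s.posA s.visited → s.scoreA = 1 → 1 ≤ s.scoreB →
      tronForceA R (fun a b => b < a) f t s → False := by
  intro f
  induction f with
  | zero =>
    intro t s _ h1 hb hF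
    rw [tronForceA] at hF
    omega
  | succ f ih =>
    intro t s hstuck h1 hb hF
    cases t with
    | true =>
      rw [tronForceA, if_pos hstuck] at hF
      by_cases hB : TronStuck R s.posB s.visited
      · rw [if_pos hB] at hF; omega
      · rw [if_neg hB] at hF; exact ih false s hstuck h1 hb hF
    | false =>
      rw [tronForceA] at hF
      by_cases hB : TronStuck R s.posB s.visited
      · rw [if_pos hB, if_pos hstuck] at hF; omega
      · rw [if_neg hB] at hF
        obtain ⟨w, hw, hwv⟩ := not_tronStuck hB
        exact ih true ⟨s.posA, w, insert w s.visited, s.scoreA, s.scoreB + 1⟩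
          (tronStuck_insert hstuck) h1 (Nat.le_succ_of_le hb) (hF w hw hwv)

variable {G : SimpleGraph V} {v : V}

private lemma tron_stuck_transfer {p : V} (hp : p ≠ v) {vis : Finset V} (hvv : v ∈ vis)
    {vis' : Finset {x : V | x ≠ v}}
    (hvis : ∀ x : {x : V | x ≠ v}, x ∈ vis' ↔ ↑x ∈ vis)
    {p' : {x : V | x ≠ v}} (hp' : (p' : V) = p) :
    TronStuck (G.induce {x : V | x ≠ v}).Adj p' vis' ↔ TronStuck G.Adj p vis := by
  constructor
  · intro h w hw
    by_cases hwv : w = v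
    · exact hwv ▸ hvv
    · exact (hvis _).mp (h ⟨w, hwv⟩ (show G.Adj ↑p' w by rw [hp']; exact hw))
  · intro h w hw
    exact (hvis w).mpr (h ↑w (by rw [← hp']; exact hw))

private lemma tron_sim (q : ℝ) :
    ∀ f : ℕ,
      (∀ (s : TronState V) (t : TronState {x : V | x ≠ v}),
        s.posA ≠ v → s.posB ≠ v → v ∈ s.visited →
        (∀ x : {x : V | x ≠ v}, x ∈ t.visited ↔ ↑x ∈ s.visited) →
        (t.posA : V) = s.posB → (t.posB : V) = s.posA →
        t.scoreA = s.scoreB → s.scoreA = t.scoreB + 1 → 1 ≤ s.scoreB →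
        Even f →
        tronForceA G.Adj (fun a b => q ≤ (a : ℝ) / (b : ℝ)) (f + 1) false s →
        tronForceB (G.induce {x : V | x ≠ v}).Adj
          (fun a b => q ≤ ((b : ℝ) + 1) / (a : ℝ)) f true t) ∧
      (∀ (s : TronState V) (t : TronState {x : V | x ≠ v}),
        s.posA ≠ v → s.posB ≠ v → v ∈ s.visited →
        (∀ x : {x : V | x ≠ v}, x ∈ t.visited ↔ ↑x ∈ s.visited) →
        (t.posA : V) = s.posB → (t.posB : V) = s.posA →
        t.scoreA = s.scoreB → s.scoreA = t.scoreB + 1 → 1 ≤ s.scoreB →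
        Odd f →
        tronForceA G.Adj (fun a b => q ≤ (a : ℝ) / (b : ℝ)) (f + 1) true s →
        tronForceB (G.induce {x : V | x ≠ v}).Adj
          (fun a b => q ≤ ((b : ℝ) + 1) / (a : ℝ)) f false t) := by
  intro f
  induction f with
  | zero =>
    constructor
    · intro s t hA hB hvv hvis hpa hpb hsa hsb hb _ hF
      rw [tronForceB]
      rw [tronForceA] at hF
      have hcast : ((t.scoreB : ℝ) + 1) = (s.scoreA : ℝ) := by rw [hsb]; push_cast; ring
      show q ≤ ((t.scoreB : ℝ) + 1) / (t.scoreA : ℝ)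
      rw [hcast, hsa]
      by_cases hBs : TronStuck G.Adj s.posB s.visited
      · rw [if_pos hBs] at hF
        by_cases hAs : TronStuck G.Adj s.posA s.visited
        · rw [if_pos hAs] at hF; exact hF
        · rw [if_neg hAs, tronForceA] at hF; exact hF
      · rw [if_neg hBs] at hF
        obtain ⟨w, hw, hwv⟩ := not_tronStuck hBs
        have h2 := hF w hw hwv
        rw [tronForceA] at h2
        have h2' : q ≤ (s.scoreA : ℝ) / ((s.scoreB : ℝ) + 1) := by exact_mod_cast h2
        refine h2'.trans ?_
        have h0 : (0:ℝ) < (s.scoreB : ℝ) := by exact_mod_cast hb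
        gcongr <;> linarith
    · intro s t hA hB hvv hvis hpa hpb hsa hsb hb hodd hF
      exact absurd hodd (by simp)
  | succ f ih =>
    constructor
    · -- G turn false with fuel f+2, H turn true with fuel f+1
      intro s t hA hB hvv hvis hpa hpb hsa hsb hb hev hF
      have hodd : Odd f := Nat.not_even_iff_odd.mp (Nat.even_add_one.mp hev)
      rw [tronForceB]
      rw [tronForceA] at hF
      have hstB := tron_stuck_transfer (G := G) hB hvv hvis hpa
      by_cases hBs : TronStuck G.Adj s.posB s.visited
      · rw [if_pos (hstB.mpr hBs)]
        rw [if_pos hBs] at hF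
        have hstA := tron_stuck_transfer (G := G) hA hvv hvis hpb
        by_cases hAs : TronStuck G.Adj s.posA s.visited
        · rw [if_pos (hstA.mpr hAs)]
          rw [if_pos hAs] at hF
          have hcast : ((t.scoreB : ℝ) + 1) = (s.scoreA : ℝ) := by
            rw [hsb]; push_cast; ring
          show q ≤ ((t.scoreB : ℝ) + 1) / (t.scoreA : ℝ)
          rw [hcast, hsa]; exact hF
        · rw [if_neg (fun h => hAs (hstA.mp h))]
          rw [if_neg hAs] at hF
          exact ih.2 s t hA hB hvv hvis hpa hpb hsa hsb hb hodd hF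
      · rw [if_neg (fun h => hBs (hstB.mp h))]
        rw [if_neg hBs] at hF
        intro w hw hwvis
        have hwadj : G.Adj s.posB ↑w := by rw [← hpa]; exact hw
        have hwnot : (↑w : V) ∉ s.visited := fun h => hwvis ((hvis w).mpr h)
        refine ih.2 ⟨s.posA, ↑w, insert (↑w) s.visited, s.scoreA, s.scoreB + 1⟩
          ⟨w, t.posB, insert w t.visited, t.scoreA + 1, t.scoreB⟩
          hA w.2 (Finset.mem_insert_of_mem hvv) ?_ rfl hpb ?_ hsb
          (show 1 ≤ s.scoreB + 1 by omega) hodd (hF ↑w hwadj hwnot)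
        · intro z
          simp only [Finset.mem_insert]
          constructor
          · rintro (rfl | hz)
            · exact Or.inl rfl
            · exact Or.inr ((hvis z).mp hz)
          · rintro (hz | hz)
            · exact Or.inl (Subtype.ext hz)
            · exact Or.inr ((hvis z).mpr hz)
        · show t.scoreA + 1 = s.scoreB + 1
          omega
    · -- G turn true with fuel f+2, H turn false with fuel f+1
      intro s t hA hB hvv hvis hpa hpb hsa hsb hb hodd hF
      have hev : Even f := by rcases hodd with ⟨k, hk⟩; exact ⟨k, by omega⟩
      rw [tronForceB]
      rw [tronForceA] at hF
      have hstB := tron_stuck_transfer (G := G) hA hvv hvis hpb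
      by_cases hAs : TronStuck G.Adj s.posA s.visited
      · rw [if_pos (hstB.mpr hAs)]
        rw [if_pos hAs] at hF
        have hstA := tron_stuck_transfer (G := G) hB hvv hvis hpa
        by_cases hBs : TronStuck G.Adj s.posB s.visited
        · rw [if_pos (hstA.mpr hBs)]
          rw [if_pos hBs] at hF
          have hcast : ((t.scoreB : ℝ) + 1) = (s.scoreA : ℝ) := by
            rw [hsb]; push_cast; ring
          show q ≤ ((t.scoreB : ℝ) + 1) / (t.scoreA : ℝ)
          rw [hcast, hsa]; exact hF
        · rw [if_neg (fun h => hBs (hstA.mp h))]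
          rw [if_neg hBs] at hF
          exact ih.1 s t hA hB hvv hvis hpa hpb hsa hsb hb hev hF
      · rw [if_neg (fun h => hAs (hstB.mp h))]
        rw [if_neg hAs] at hF
        obtain ⟨w, hw, hwn, hF'⟩ := hF
        have hwne : w ≠ v := fun h => hwn (h ▸ hvv)
        refine ⟨⟨w, hwne⟩, show G.Adj ↑t.posB w by rw [hpb]; exact hw,
          fun h => hwn ((hvis _).mp h), ?_⟩
        refine ih.1 ⟨w, s.posB, insert w s.visited, s.scoreA + 1, s.scoreB⟩
          ⟨t.posA, ⟨w, hwne⟩, insert ⟨w, hwne⟩ t.visited, t.scoreA, t.scoreB + 1⟩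
          hwne hB (Finset.mem_insert_of_mem hvv) ?_ hpa rfl hsa
          (show s.scoreA + 1 = (t.scoreB + 1) + 1 by omega) hb hev hF'
        intro z
        simp only [Finset.mem_insert]
        constructor
        · rintro (rfl | hz)
          · exact Or.inl rfl
          · exact Or.inr ((hvis z).mp hz)
        · rintro (hz | hz)
          · exact Or.inl (Subtype.ext hz)
          · exact Or.inr ((hvis z).mpr hz)

end TronAux
/-- Suppose that on `G` Alice's optimal score strictly
exceeds Bob's and `v` is an optimal starting vertex for her (she wins starting
there).  Let `H = G - v`.  Then any ratio `q ≤ Alice/Bob` that Alice can force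
on `G` starting at `v` satisfies `q ≤ (Bob + 1)/Alice` forceable by Bob on `H`. -/
theorem tron_delete_start_vertex
    {V : Type} [Fintype V] [DecidableEq V] (G : SimpleGraph V)
    (hwin : aliceCanForce G (fun a b => b < a)) (v : V)
    (hv : ∀ w, w ≠ v → tronForceA G.Adj (fun a b => b < a)
      (tronFuel V) true (tronInit v w)) :
    ∀ q : ℝ,
      (∀ w, w ≠ v → tronForceA G.Adj (fun a b => q ≤ (a : ℝ) / (b : ℝ))
        (tronFuel V) true (tronInit v w)) →
      bobCanForce (G.induce {x | x ≠ v})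
        (fun a b => q ≤ ((b : ℝ) + 1) / (a : ℝ)) := by
  intro q hq
  intro x
  have hx : (x : V) ≠ v := x.2
  have hnst : ¬ TronStuck G.Adj v ({v, ↑x} : Finset V) := fun hst =>
    tron_aliceStuck_not_win (tronFuel V) true (tronInit v ↑x) hst rfl le_rfl (hv ↑x hx)
  have hqf := hq ↑x hx
  have hfuelG : tronFuel V = (2 * Fintype.card V + 1) + 1 := rfl
  rw [hfuelG, tronForceA] at hqf
  simp only [tronInit] at hqf
  replace hqf := (iff_of_eq (if_neg hnst)).mp hqf
  obtain ⟨w, hadj, hwvis, hF⟩ := hqf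
  have hwv : w ≠ v := fun h => hwvis (by rw [h]; exact Finset.mem_insert_self _ _)
  have hwx : w ≠ ↑x := fun h => hwvis (by rw [h]; simp)
  refine ⟨⟨w, hwv⟩, fun h => hwx (congrArg Subtype.val h), ?_⟩
  have hcard : Fintype.card ({x : V | x ≠ v}) = Fintype.card V - 1 := Set.card_ne_eq v
  have hpos : 0 < Fintype.card V := Fintype.card_pos_iff.mpr ⟨v⟩
  have hfuelH : tronFuel ({x : V | x ≠ v}) = 2 * Fintype.card V := by
    rw [tronFuel, hcard]; omega
  rw [hfuelH]
  refine (tron_sim q (2 * Fintype.card V)).1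
    ⟨w, ↑x, insert w {v, ↑x}, 1 + 1, 1⟩ (tronInit x ⟨w, hwv⟩)
    hwv hx (Finset.mem_insert_of_mem (Finset.mem_insert_self _ _)) ?_
    rfl rfl rfl rfl le_rfl ⟨Fintype.card V, two_mul _⟩ hF
  intro z
  simp only [tronInit, Finset.mem_insert, Finset.mem_singleton]
  constructor
  · rintro (rfl | hz)
    · exact Or.inr (Or.inr rfl)
    · exact Or.inl (congrArg Subtype.val hz)
  · rintro (hz | hz | hz)
    · exact Or.inr (Subtype.ext hz)
    · exact absurd hz z.2
    · exact Or.inl (Subtype.ext hz)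
end

section
/- In the complete graph K_n with n odd, the Tron game under optimal play is such that Alice wins (her score exceeds Bob's), and every vertex is an optimal starting vertex for Alice. -/
lemma tron_key (n : ℕ) :
    ∀ (f : ℕ) (turn : Bool) (s : TronState (Fin n)),
      s.posA ∈ s.visited → s.posB ∈ s.visited →
      n - s.visited.card ≤ f →
      (if turn then
        s.scoreB + (n - s.visited.card) / 2 < s.scoreA + (n - s.visited.card + 1) / 2
       else
        s.scoreB + (n - s.visited.card + 1) / 2 < s.scoreA + (n - s.visited.card) / 2) →
      tronForceA (⊤ : SimpleGraph (Fin n)).Adj (fun a b => b < a) f turn s := by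
  intro f
  induction f with
  | zero =>
    intro turn s hA hB hfuel hcond
    have h0 : n - s.visited.card = 0 := by omega
    simp only [tronForceA]
    cases turn <;> simp [h0] at hcond <;> omega
  | succ f ih =>
    intro turn s hA hB hfuel hcond
    by_cases huniv : s.visited = Finset.univ
    · have hstA : TronStuck (⊤ : SimpleGraph (Fin n)).Adj s.posA s.visited := by
        intro w _; simp [huniv]
      have hstB : TronStuck (⊤ : SimpleGraph (Fin n)).Adj s.posB s.visited := by
        intro w _; simp [huniv]
      have hcard : s.visited.card = n := by
        simp [huniv]
      cases turn <;> simp only [tronForceA, if_pos hstA, if_pos hstB] <;>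
        simp [hcard] at hcond <;> omega
    · obtain ⟨u, hu⟩ : ∃ u, u ∉ s.visited := by
        by_contra h
        push_neg at h
        exact huniv (Finset.eq_univ_iff_forall.2 h)
      have hcardlt : s.visited.card < n := by
        have h1 : s.visited.card ≤ n := by
          simpa using Finset.card_le_card (Finset.subset_univ s.visited)
        rcases lt_or_eq_of_le h1 with h | h
        · exact h
        · exact absurd (Finset.eq_univ_of_card _ (by simpa using h)) huniv
      cases turn with
      | true =>
        have hnst : ¬ TronStuck (⊤ : SimpleGraph (Fin n)).Adj s.posA s.visited := by
          intro h
          exact hu (h u (by simp; rintro rfl; exact hu hA))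
        simp only [tronForceA, if_neg hnst]
        refine ⟨u, by simp; rintro rfl; exact hu hA, hu, ?_⟩
        apply ih
        · exact Finset.mem_insert_self _ _
        · exact Finset.mem_insert_of_mem hB
        · simp [Finset.card_insert_of_notMem hu]; omega
        · simp at hcond
          simp [Finset.card_insert_of_notMem hu]
          omega
      | false =>
        have hnst : ¬ TronStuck (⊤ : SimpleGraph (Fin n)).Adj s.posB s.visited := by
          intro h
          exact hu (h u (by simp; rintro rfl; exact hu hB))
        simp only [tronForceA, if_neg hnst]
        intro w hadj hw
        apply ih
        · exact Finset.mem_insert_of_mem hA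
        · exact Finset.mem_insert_self _ _
        · simp [Finset.card_insert_of_notMem hw]; omega
        · simp at hcond
          simp [Finset.card_insert_of_notMem hw]
          omega

/-- On the complete graph `K_n` with `n` odd, Alice wins
under optimal play, and every vertex is an optimal starting vertex for her:
from every start vertex she can force her score to exceed Bob's. -/
theorem tron_complete_graph_odd
    (n : ℕ) (hodd : Odd n) (hn : 3 ≤ n) :
    aliceCanForce (⊤ : SimpleGraph (Fin n)) (fun a b => b < a) ∧
    ∀ v : Fin n, ∀ w, w ≠ v →
      tronForceA (⊤ : SimpleGraph (Fin n)).Adj (fun a b => b < a)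
        (tronFuel (Fin n)) true (tronInit v w) := by
  obtain ⟨m, rfl⟩ := hodd
  have key : ∀ v : Fin (2 * m + 1), ∀ w, w ≠ v →
      tronForceA (⊤ : SimpleGraph (Fin (2 * m + 1))).Adj (fun a b => b < a)
        (tronFuel (Fin (2 * m + 1))) true (tronInit v w) := by
    intro v w hwv
    apply tron_key
    · exact Finset.mem_insert_self _ _
    · simp [tronInit]
    · simp [tronInit, tronFuel, Finset.card_insert_of_notMem (Finset.notMem_singleton.2 (Ne.symm hwv)), Finset.card_singleton]
      omega
    · simp only [if_true, tronInit]
      rw [Finset.card_insert_of_notMem (Finset.notMem_singleton.2 (Ne.symm hwv)), Finset.card_singleton]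
      omega
  refine ⟨⟨⟨0, by omega⟩, fun w hw => key _ w hw⟩, key⟩
end
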